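/- arXiv:2310.04096 — 8 statements merged into one kernel-verified Lean document; each statement's English description precedes it below -/
import Mathlib

section
/- Let C ⊆ ℝ^n be a compact convex set, f : ℝ^n → ℝ convex and differentiable on an open set containing C, and suppose (C,f) satisfies the strong (M,0)-growth property for some M > 0. Then the iterates of the Frank–Wolfe algorithm with open-loop step sizes η_t = ℓ/(t+ℓ), for any ℓ ∈ ℕ with ℓ ≥ 2, satisfy primaldual_t ≤ η_t · M for all t ≥ 1. -/
open Set Finset Real Pointwise

noncomputable section

abbrev Eucl (n : ℕ) := EuclideanSpace ℝ (Fin n)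

variable {n : ℕ}

/-- A Frank–Wolfe vertex at `x`: a minimizer over `C` of the linear function `y ↦ ⟪∇f(x), y⟫`. -/
def IsFWVertex (C : Set (Eucl n)) (f : Eucl n → ℝ) (x v : Eucl n) : Prop :=
  v ∈ C ∧ ∀ y ∈ C, (inner ℝ (gradient f x) v : ℝ) ≤ (inner ℝ (gradient f x) y : ℝ)

/-- The Wolfe gap `gap(x) = max_{y ∈ C} ⟪∇f(x), x - y⟫`. -/
def gapF (C : Set (Eucl n)) (f : Eucl n → ℝ) (x : Eucl n) : ℝ :=
  sSup ((fun y => (inner ℝ (gradient f x) (x - y) : ℝ)) '' C)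

/-- The primal suboptimality gap `subopt(x) = f(x) - min_{y ∈ C} f(y)`. -/
def suboptF (C : Set (Eucl n)) (f : Eucl n → ℝ) (x : Eucl n) : ℝ :=
  f x - sInf (f '' C)

/-- Bregman divergence `D_f(y, x) = f(y) - f(x) - ⟪∇f(x), y - x⟫`. -/
def bregmanD (f : Eucl n → ℝ) (y x : Eucl n) : ℝ :=
  f y - f x - (inner ℝ (gradient f x) (y - x) : ℝ)

/-- Strong `(M, r)`-growth property. -/
def StrongGrowth (C : Set (Eucl n)) (f : Eucl n → ℝ) (M r : ℝ) : Prop :=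
  ∀ x ∈ C, ∀ v, IsFWVertex C f x v → ∀ η ∈ Icc (0:ℝ) 1,
    bregmanD f (x + η • (v - x)) x ≤ M * η ^ 2 / 2 * gapF C f x ^ r

/-- Weak `(M, r)`-growth property. -/
def WeakGrowth (C : Set (Eucl n)) (f : Eucl n → ℝ) (M r : ℝ) : Prop :=
  ∀ x ∈ C, ∀ v, IsFWVertex C f x v → ∀ η ∈ Icc (0:ℝ) 1,
    bregmanD f (x + η • (v - x)) x * suboptF C f x ^ (1 - r) ≤ M * η ^ 2 / 2 * gapF C f x

/-- Gaps `(m, r)`-growth property. -/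
def GapsGrowth (C : Set (Eucl n)) (f : Eucl n → ℝ) (m r : ℝ) : Prop :=
  ∀ x ∈ C, m * suboptF C f x ^ (1 - r) ≤ gapF C f x

/-- `primaldual_t = min_{0 ≤ k ≤ t} (f(x_t) - f(x_k) + gap_k)`. -/
def primaldualSeq (C : Set (Eucl n)) (f : Eucl n → ℝ) (x : ℕ → Eucl n) (t : ℕ) : ℝ :=
  (Finset.range (t + 1)).inf' (Finset.nonempty_range_iff.mpr (Nat.succ_ne_zero t))
    (fun k => f (x t) - f (x k) + gapF C f (x k))

/-- **Theorem (Strong `(M,0)`-growth).** For FW with open-loop step-sizes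
`η_t = ℓ/(t+ℓ)`, `ℓ ≥ 2`, under strong `(M,0)`-growth: `primaldual_t ≤ η_t · M` for `t ≥ 1`. -/
theorem fw_strong_growth_zero_rate
    (n : ℕ) (C : Set (Eucl n)) (f : Eucl n → ℝ)
    (hCcomp : IsCompact C) (hCconv : Convex ℝ C) (hCne : C.Nonempty)
    (hfconv : ConvexOn ℝ C f)
    (U : Set (Eucl n)) (hUopen : IsOpen U) (hCU : C ⊆ U)
    (hfdiff : DifferentiableOn ℝ f U)
    (M : ℝ) (hM : 0 < M) (hgrowth : StrongGrowth C f M 0)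
    (ℓ : ℕ) (hℓ : 2 ≤ ℓ)
    (η : ℕ → ℝ) (hη : ∀ t : ℕ, η t = (ℓ : ℝ) / ((t : ℝ) + ℓ))
    (x v : ℕ → Eucl n)
    (hx0 : x 0 ∈ C)
    (hv : ∀ t : ℕ, IsFWVertex C f (x t) (v t))
    (hstep : ∀ t : ℕ, x (t + 1) = x t + η t • (v t - x t))
    (t : ℕ) (ht : 1 ≤ t) :
    primaldualSeq C f x t ≤ η t * M := by

  have hℓpos : (0:ℝ) < (ℓ : ℝ) := by
    have : (2:ℝ) ≤ (ℓ:ℝ) := by exact_mod_cast hℓ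
    linarith
  have hℓ2 : (2:ℝ) ≤ (ℓ:ℝ) := by exact_mod_cast hℓ
  have hηmem : ∀ s : ℕ, η s ∈ Icc (0:ℝ) 1 := by
    intro s
    have hs : (0:ℝ) ≤ (s:ℝ) := Nat.cast_nonneg s
    rw [hη]
    constructor
    · positivity
    · rw [div_le_one (by linarith)]; linarith
  have hηpos : ∀ s : ℕ, 0 < η s := by
    intro s
    have hs : (0:ℝ) ≤ (s:ℝ) := Nat.cast_nonneg s
    rw [hη]; positivity
  have hxC : ∀ s, x s ∈ C := by
    intro s
    induction s with
    | zero => exact hx0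
    | succ s ih =>
      rw [hstep s]
      have h1 : (0:ℝ) ≤ 1 - η s := by linarith [(hηmem s).2]
      have := hCconv ih (hv s).1 h1 (hηmem s).1 (by ring)
      convert this using 1
      module
  have hgapeq : ∀ s, gapF C f (x s) = (inner ℝ (gradient f (x s)) (x s - v s) : ℝ) := by
    intro s
    apply IsGreatest.csSup_eq
    constructor
    · exact ⟨v s, (hv s).1, rfl⟩
    · rintro r ⟨y, hy, rfl⟩
      simp only [inner_sub_right]
      linarith [(hv s).2 y hy]
  have hdesc : ∀ s, f (x (s+1)) ≤ f (x s) - η s * gapF C f (x s) + M * η s ^ 2 / 2 := by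
    intro s
    have hg := hgrowth (x s) (hxC s) (v s) (hv s) (η s) (hηmem s)
    rw [Real.rpow_zero, mul_one] at hg
    unfold bregmanD at hg
    rw [← hstep s] at hg
    have hinner : (inner ℝ (gradient f (x s)) (x (s+1) - x s) : ℝ)
        = - (η s * gapF C f (x s)) := by
      rw [hstep s, hgapeq s]
      rw [add_sub_cancel_left, inner_smul_right, inner_sub_right, inner_sub_right]
      ring
    rw [hinner] at hg
    linarith
  have hpdle : ∀ s, primaldualSeq C f x s ≤ gapF C f (x s) := by
    intro s
    have := Finset.inf'_le (s := Finset.range (s+1))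
      (fun k => f (x s) - f (x k) + gapF C f (x k))
      (Finset.mem_range.mpr (Nat.lt_succ_self s))
    simpa only [primaldualSeq, sub_self, zero_add] using this
  have hrec : ∀ s, primaldualSeq C f x (s+1)
      ≤ (1 - η s) * primaldualSeq C f x s + M * η s ^ 2 / 2 := by
    intro s
    obtain ⟨k, hk, hkeq⟩ := Finset.exists_mem_eq_inf'
      (Finset.nonempty_range_iff.mpr (Nat.succ_ne_zero s))
      (fun k => f (x s) - f (x k) + gapF C f (x k))
    have hk' : k ∈ Finset.range (s + 1 + 1) := by
      rw [Finset.mem_range] at hk ⊢; omega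
    have h1 : primaldualSeq C f x (s+1) ≤ f (x (s+1)) - f (x k) + gapF C f (x k) :=
      Finset.inf'_le _ hk'
    have heq : primaldualSeq C f x s = f (x s) - f (x k) + gapF C f (x k) := hkeq
    have h2 := hpdle s
    have h3 := hdesc s
    have h4 : η s * primaldualSeq C f x s ≤ η s * gapF C f (x s) :=
      mul_le_mul_of_nonneg_left h2 (le_of_lt (hηpos s))
    linarith
  -- numeric step inequality
  have hstepnum : ∀ s : ℕ, (1 - η s) * η s + η s ^ 2 / 2 ≤ η (s+1) := by
    intro s
    have ha : (0:ℝ) ≤ (s:ℝ) := Nat.cast_nonneg s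
    rw [hη s, hη (s+1)]
    push_cast
    have d1 : (0:ℝ) < (s:ℝ) + ℓ := by linarith
    have d2 : (0:ℝ) < (s:ℝ) + 1 + ℓ := by linarith
    have hrw : (1 - (ℓ:ℝ)/((s:ℝ)+ℓ)) * ((ℓ:ℝ)/((s:ℝ)+ℓ)) + ((ℓ:ℝ)/((s:ℝ)+ℓ))^2/2
        = ((ℓ:ℝ)*((s:ℝ)+ℓ) - (ℓ:ℝ)^2/2)/(((s:ℝ)+ℓ)^2) := by
      field_simp
      ring
    rw [hrw, div_le_div_iff₀ (by positivity) d2]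
    nlinarith [mul_nonneg ha (by linarith : (0:ℝ) ≤ (ℓ:ℝ) - 2)]
  -- main induction
  have main : ∀ s : ℕ, 1 ≤ s → primaldualSeq C f x s ≤ η s * M := by
    intro s
    induction s with
    | zero => intro h; omega
    | succ s ih =>
      intro _
      rcases Nat.eq_zero_or_pos s with h0 | hpos
      · subst h0
        have hη0 : η 0 = 1 := by
          rw [hη]; push_cast; rw [zero_add, div_self (ne_of_gt hℓpos)]
        have h := hrec 0
        rw [hη0] at h
        have hη1 : M / 2 ≤ η 1 * M := by
          rw [hη]
          push_cast
          rw [div_mul_eq_mul_div, le_div_iff₀ (by linarith)]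
          nlinarith
        calc primaldualSeq C f x 1 ≤ (1 - 1) * primaldualSeq C f x 0 + M * 1 ^ 2 / 2 := h
          _ = M / 2 := by ring
          _ ≤ η 1 * M := hη1
      · have ihp := ih hpos
        have h := hrec s
        have h1η : (0:ℝ) ≤ 1 - η s := by linarith [(hηmem s).2]
        have h5 : (1 - η s) * primaldualSeq C f x s ≤ (1 - η s) * (η s * M) :=
          mul_le_mul_of_nonneg_left ihp h1η
        have h6 := hstepnum s
        have h7 : ((1 - η s) * η s + η s ^ 2 / 2) * M ≤ η (s+1) * M :=
          mul_le_mul_of_nonneg_right h6 hM.le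
        nlinarith
  exact main t ht
end
end

section
/- Let C ⊆ ℝ^n be a compact convex set, f : ℝ^n → ℝ convex and differentiable on an open set containing C, and suppose (C,f) satisfies the strong (M,1)-growth property for some M > 0. Let ℓ ∈ ℕ with ℓ ≥ 1, η_t = ℓ/(t+ℓ), and S = max{1, ⌈ℓM/2 − ℓ⌉} (equivalently, S is the least i ≥ 1 with M·η_i/2 ≤ 1). Then the iterates of the Frank–Wolfe algorithm with these step sizes satisfy, for all t ≥ S, primaldual_t ≤ primaldual_S · (η_{t−1}/η_{S−1})^ℓ · exp(Mπ²ℓ²/12). -/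
open Set Finset Real Pointwise

noncomputable section

variable {n : ℕ}

lemma inner_gradient_eq (f : Eucl n → ℝ) (x v : Eucl n) :
    (inner ℝ (gradient f x) v : ℝ) = fderiv ℝ f x v :=
  InnerProductSpace.toDual_symm_apply

lemma convex_grad_ineq {C : Set (Eucl n)} {f : Eucl n → ℝ}
    (hfconv : ConvexOn ℝ C f) {x y : Eucl n} (hx : x ∈ C) (hy : y ∈ C)
    (hd : DifferentiableAt ℝ f x) :
    (inner ℝ (gradient f x) (y - x) : ℝ) ≤ f y - f x := by
  rw [inner_gradient_eq]
  set φ : ℝ → ℝ := fun θ => f (x + θ • (y - x)) with hφ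
  have hg : HasDerivAt (fun θ : ℝ => x + θ • (y - x)) (y - x) 0 := by
    simpa using ((hasDerivAt_id (0:ℝ)).smul_const (y - x)).const_add x
  have hfd : HasFDerivAt f (fderiv ℝ f x) (x + (0:ℝ) • (y - x)) := by
    simpa using hd.hasFDerivAt
  have hφd : HasDerivAt φ (fderiv ℝ f x (y - x)) 0 :=
    hfd.comp_hasDerivAt 0 hg
  have htend : Filter.Tendsto (slope φ 0) (nhdsWithin 0 (Ioi (0:ℝ)))
      (nhds (fderiv ℝ f x (y - x))) :=
    (hasDerivAt_iff_tendsto_slope.mp hφd).mono_left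
      (nhdsWithin_mono _ (fun z hz => ne_of_gt hz))
  refine le_of_tendsto htend ?_
  filter_upwards [Ioc_mem_nhdsGT_of_mem (Set.left_mem_Ico.mpr one_pos)] with θ hθ
  obtain ⟨hθ0, hθ1⟩ := hθ
  have hconv := hfconv.2 hx hy (by linarith : (0:ℝ) ≤ 1 - θ) hθ0.le (by ring)
  have hpt : (1 - θ) • x + θ • y = x + θ • (y - x) := by
    rw [smul_sub, sub_smul, one_smul]; abel
  rw [hpt, smul_eq_mul, smul_eq_mul] at hconv
  have hle : φ θ - φ 0 ≤ θ * (f y - f x) := by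
    simp only [hφ, zero_smul, add_zero]
    nlinarith
  have : slope φ 0 θ = (φ θ - φ 0) / θ := by
    rw [slope_def_field]; ring_nf
  rw [this, div_le_iff₀ hθ0]
  linarith

lemma nat_prod_shift_identity (ℓ S t : ℕ) (hSt : S ≤ t) :
    (∏ i ∈ Finset.Ico S t, i) * (∏ j ∈ Finset.range ℓ, (t + j)) =
      (∏ j ∈ Finset.range ℓ, (S + j)) * (∏ i ∈ Finset.Ico S t, (i + ℓ)) := by
  have h1 : ∏ j ∈ Finset.range ℓ, (t + j) = ∏ i ∈ Finset.Ico t (t + ℓ), i := by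
    rw [Finset.prod_Ico_eq_prod_range]; simp
  have h2 : ∏ j ∈ Finset.range ℓ, (S + j) = ∏ i ∈ Finset.Ico S (S + ℓ), i := by
    rw [Finset.prod_Ico_eq_prod_range]; simp
  have h3 : ∏ i ∈ Finset.Ico S t, (i + ℓ) = ∏ i ∈ Finset.Ico (S + ℓ) (t + ℓ), i := by
    rw [Finset.prod_Ico_eq_prod_range, Finset.prod_Ico_eq_prod_range]
    have : t + ℓ - (S + ℓ) = t - S := by omega
    rw [this]
    exact Finset.prod_congr rfl (fun j _ => by omega)
  rw [h1, h2, h3, Finset.prod_Ico_consecutive _ hSt (Nat.le_add_right t ℓ),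
    Finset.prod_Ico_consecutive _ (Nat.le_add_right S ℓ) (by omega)]

lemma prod_ratio_le (ℓ S t : ℕ) (hℓ : 1 ≤ ℓ) (hS : 1 ≤ S) (hSt : S ≤ t) :
    ∏ i ∈ Finset.Ico S t, ((i : ℝ) / ((i : ℝ) + ℓ)) ≤
      (((S : ℝ) + ℓ - 1) / ((t : ℝ) + ℓ - 1)) ^ ℓ := by
  have hℓR : (1:ℝ) ≤ (ℓ:ℝ) := by exact_mod_cast hℓ
  have hSR : (1:ℝ) ≤ (S:ℝ) := by exact_mod_cast hS
  have htR : (S:ℝ) ≤ (t:ℝ) := by exact_mod_cast hSt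
  have hP2pos : 0 < ∏ i ∈ Finset.Ico S t, ((i : ℝ) + ℓ) :=
    Finset.prod_pos (fun i _ => by positivity)
  have htR1 : (1:ℝ) ≤ (t:ℝ) := le_trans hSR htR
  have hQ2pos : 0 < ∏ j ∈ Finset.range ℓ, ((t : ℝ) + j) :=
    Finset.prod_pos (fun j _ => by linarith [Nat.cast_nonneg (α := ℝ) j])
  have hident : ∏ i ∈ Finset.Ico S t, ((i : ℝ) / ((i : ℝ) + ℓ)) =
      ∏ j ∈ Finset.range ℓ, (((S : ℝ) + j) / ((t : ℝ) + j)) := by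
    rw [Finset.prod_div_distrib, Finset.prod_div_distrib]
    rw [div_eq_div_iff hP2pos.ne' hQ2pos.ne']
    have := nat_prod_shift_identity ℓ S t hSt
    have hcast : ((∏ i ∈ Finset.Ico S t, i : ℕ) : ℝ) * ((∏ j ∈ Finset.range ℓ, (t + j) : ℕ) : ℝ) =
        ((∏ j ∈ Finset.range ℓ, (S + j) : ℕ) : ℝ) * ((∏ i ∈ Finset.Ico S t, (i + ℓ) : ℕ) : ℝ) := by
      exact_mod_cast congrArg (fun m : ℕ => (m : ℝ)) this
    push_cast at hcast
    linarith [hcast]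
  rw [hident]
  have hbound : ∀ j ∈ Finset.range ℓ,
      ((S : ℝ) + j) / ((t : ℝ) + j) ≤ ((S : ℝ) + ℓ - 1) / ((t : ℝ) + ℓ - 1) := by
    intro j hj
    have hjℓ : (j : ℝ) ≤ (ℓ : ℝ) - 1 := by
      have := Finset.mem_range.mp hj; have : (j:ℝ) + 1 ≤ (ℓ:ℝ) := by exact_mod_cast this
      linarith
    have hjn : (0:ℝ) ≤ (j:ℝ) := Nat.cast_nonneg j
    rw [div_le_div_iff₀ (by linarith) (by linarith)]
    nlinarith [mul_nonneg (sub_nonneg.mpr hjℓ) (sub_nonneg.mpr htR)]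
  calc ∏ j ∈ Finset.range ℓ, (((S : ℝ) + j) / ((t : ℝ) + j))
      ≤ ∏ _j ∈ Finset.range ℓ, (((S : ℝ) + ℓ - 1) / ((t : ℝ) + ℓ - 1)) := by
        apply Finset.prod_le_prod (fun j hj => by positivity) hbound
    _ = (((S : ℝ) + ℓ - 1) / ((t : ℝ) + ℓ - 1)) ^ ℓ := by
        rw [Finset.prod_const, Finset.card_range]

lemma factor_ineq (i l M : ℝ) (hA : 0 < i) (hAL : 0 < i + l) (hl : 1 ≤ l) (hM : 0 < M) :
    i/(i+l) + M*(l/(i+l))^2/2 ≤ i/(i+l) * (1 + M*l^2/2 * (1/i^2)) := by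
  rw [div_pow, ← sub_nonneg]
  have key : i * (i + l) ≤ (i + l)^2 := by nlinarith
  have expand : i/(i+l) * (1 + M*l^2/2 * (1/i^2)) - (i/(i+l) + M*(l^2/(i+l)^2)/2)
      = M*l^2/2 * (1/(i*(i+l)) - 1/((i+l)^2)) := by
    field_simp
    ring
  rw [expand]
  have h1 : 1/((i+l)^2) ≤ 1/(i*(i+l)) :=
    one_div_le_one_div_of_le (by positivity) key
  have h2 : 0 ≤ 1/(i*(i+l)) - 1/((i+l)^2) := by linarith
  positivity

set_option maxHeartbeats 1000000 in
/-- **Theorem (Strong `(M,1)`-growth, primal-dual rate).** -/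
theorem fw_strong_growth_one_rate
    (n : ℕ) (C : Set (Eucl n)) (f : Eucl n → ℝ)
    (hCcomp : IsCompact C) (hCconv : Convex ℝ C) (hCne : C.Nonempty)
    (hfconv : ConvexOn ℝ C f)
    (U : Set (Eucl n)) (hUopen : IsOpen U) (hCU : C ⊆ U)
    (hfdiff : DifferentiableOn ℝ f U)
    (M : ℝ) (hM : 0 < M) (hgrowth : StrongGrowth C f M 1)
    (ℓ : ℕ) (hℓ : 1 ≤ ℓ)
    (η : ℕ → ℝ) (hη : ∀ t : ℕ, η t = (ℓ : ℝ) / ((t : ℝ) + ℓ))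
    (x v : ℕ → Eucl n)
    (hx0 : x 0 ∈ C)
    (hv : ∀ t : ℕ, IsFWVertex C f (x t) (v t))
    (hstep : ∀ t : ℕ, x (t + 1) = x t + η t • (v t - x t))
    (S : ℕ) (hS : S = max 1 (⌈(ℓ : ℝ) * M / 2 - (ℓ : ℝ)⌉.toNat))
    (t : ℕ) (ht : S ≤ t) :
    primaldualSeq C f x t ≤
      primaldualSeq C f x S * (η (t - 1) / η (S - 1)) ^ ℓ *
        Real.exp (M * π ^ 2 * (ℓ : ℝ) ^ 2 / 12) := by
  have hℓR : (1:ℝ) ≤ (ℓ:ℝ) := by exact_mod_cast hℓ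
  have hℓ0 : (0:ℝ) < (ℓ:ℝ) := by linarith
  have hS1 : 1 ≤ S := by rw [hS]; exact le_max_left _ _
  have ht1 : 1 ≤ t := le_trans hS1 ht
  have hSR : (1:ℝ) ≤ (S:ℝ) := by exact_mod_cast hS1
  have htSR : (S:ℝ) ≤ (t:ℝ) := by exact_mod_cast ht
  -- step sizes
  have hηpos : ∀ i : ℕ, 0 < η i := by
    intro i; rw [hη]
    apply div_pos hℓ0
    have : (0:ℝ) ≤ (i:ℝ) := Nat.cast_nonneg i
    linarith
  have hη1 : ∀ i : ℕ, η i ≤ 1 := by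
    intro i; rw [hη]
    rw [div_le_one (by linarith [Nat.cast_nonneg (α := ℝ) i])]
    linarith [Nat.cast_nonneg (α := ℝ) i]
  -- membership and differentiability
  have hmem : ∀ i : ℕ, x i ∈ C := by
    intro i
    induction i with
    | zero => exact hx0
    | succ m ih =>
      rw [hstep m]
      exact hCconv.add_smul_sub_mem ih (hv m).1 ⟨(hηpos m).le, hη1 m⟩
  have hdiff : ∀ i : ℕ, DifferentiableAt ℝ f (x i) := fun i =>
    (hfdiff (x i) (hCU (hmem i))).differentiableAt (hUopen.mem_nhds (hCU (hmem i)))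
  -- gap facts
  have hgapeq : ∀ i : ℕ, gapF C f (x i) = (inner ℝ (gradient f (x i)) (x i - v i) : ℝ) := by
    intro i
    apply IsGreatest.csSup_eq
    constructor
    · exact ⟨v i, (hv i).1, rfl⟩
    · rintro r ⟨y, hy, rfl⟩
      have := (hv i).2 y hy
      simp only [inner_sub_right]
      linarith
  have hgapge : ∀ i : ℕ, ∀ y ∈ C,
      (inner ℝ (gradient f (x i)) (x i - y) : ℝ) ≤ gapF C f (x i) := by
    intro i y hy
    rw [hgapeq i]
    have := (hv i).2 y hy
    simp only [inner_sub_right]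
    linarith
  have hgap0 : ∀ i : ℕ, 0 ≤ gapF C f (x i) := by
    intro i
    have := hgapge i (x i) (hmem i)
    simpa using this
  -- descent inequality
  have hdesc : ∀ i : ℕ, f (x (i+1)) ≤ f (x i) - (η i - M * η i ^ 2 / 2) * gapF C f (x i) := by
    intro i
    have hgr := hgrowth (x i) (hmem i) (v i) (hv i) (η i) ⟨(hηpos i).le, hη1 i⟩
    rw [Real.rpow_one, ← hstep i] at hgr
    unfold bregmanD at hgr
    have hxx : x (i+1) - x i = η i • (v i - x i) := by rw [hstep i]; abel
    rw [hxx, real_inner_smul_right] at hgr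
    have hiv : (inner ℝ (gradient f (x i)) (v i - x i) : ℝ) = - gapF C f (x i) := by
      rw [hgapeq i]
      simp only [inner_sub_right]
      ring
    rw [hiv] at hgr
    nlinarith [hgr]
  -- the threshold
  have hSceil : (ℓ:ℝ) * M / 2 - (ℓ:ℝ) ≤ (S:ℝ) := by
    rw [hS]
    push_cast [Nat.cast_max]
    have h1 : (ℓ:ℝ) * M / 2 - (ℓ:ℝ) ≤ (⌈(ℓ:ℝ) * M / 2 - (ℓ:ℝ)⌉ : ℝ) := Int.le_ceil _
    have h2 : ((⌈(ℓ:ℝ) * M / 2 - (ℓ:ℝ)⌉ : ℤ) : ℝ) ≤ ((⌈(ℓ:ℝ) * M / 2 - (ℓ:ℝ)⌉.toNat : ℤ) : ℝ) := by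
      exact_mod_cast Int.self_le_toNat _
    have h3 : ((⌈(ℓ:ℝ) * M / 2 - (ℓ:ℝ)⌉.toNat : ℝ)) ≤ max (1:ℝ) (⌈(ℓ:ℝ) * M / 2 - (ℓ:ℝ)⌉.toNat : ℝ) :=
      le_max_right _ _
    push_cast at h2
    linarith
  have hcoef : ∀ i : ℕ, S ≤ i → 0 ≤ η i - M * η i ^ 2 / 2 := by
    intro i hi
    have hiR : (S:ℝ) ≤ (i:ℝ) := by exact_mod_cast hi
    have hMη : M * η i ≤ 2 := by
      rw [hη]
      rw [mul_div_assoc']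
      rw [div_le_iff₀ (by linarith [Nat.cast_nonneg (α := ℝ) i])]
      nlinarith
    nlinarith [hηpos i, sq_nonneg (η i)]
  -- primal-dual facts
  have hPDle : ∀ s k : ℕ, k ≤ s →
      primaldualSeq C f x s ≤ f (x s) - f (x k) + gapF C f (x k) := by
    intro s k hk
    exact Finset.inf'_le _ (Finset.mem_range.mpr (Nat.lt_succ_of_le hk))
  have hPDgap : ∀ s : ℕ, primaldualSeq C f x s ≤ gapF C f (x s) := by
    intro s
    have := hPDle s s le_rfl
    simpa using this
  have hPD0 : ∀ s : ℕ, 0 ≤ primaldualSeq C f x s := by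
    intro s
    apply Finset.le_inf'
    intro k hk
    have h1 := convex_grad_ineq hfconv (hmem k) (hmem s) (hdiff k)
    have h2 := hgapge k (x s) (hmem s)
    have h3 : (inner ℝ (gradient f (x k)) (x k - x s) : ℝ)
        = - (inner ℝ (gradient f (x k)) (x s - x k) : ℝ) := by
      rw [← inner_neg_right]
      congr 1
      abel
    rw [h3] at h2
    linarith
  -- one-step contraction
  have hstepPD : ∀ i : ℕ, S ≤ i →
      primaldualSeq C f x (i+1) ≤ (1 - η i + M * η i ^ 2 / 2) * primaldualSeq C f x i := by
    intro i hi
    obtain ⟨k₀, hk₀, hPDeq⟩ := Finset.exists_mem_eq_inf'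
      (Finset.nonempty_range_iff.mpr (Nat.succ_ne_zero i))
      (fun k => f (x i) - f (x k) + gapF C f (x k))
    have hk₀le : k₀ ≤ i := Nat.lt_succ_iff.mp (Finset.mem_range.mp hk₀)
    have h1 : primaldualSeq C f x (i+1) ≤ f (x (i+1)) - f (x k₀) + gapF C f (x k₀) :=
      hPDle (i+1) k₀ (le_trans hk₀le (Nat.le_succ i))
    have h2 : primaldualSeq C f x i = f (x i) - f (x k₀) + gapF C f (x k₀) := hPDeq
    have h3 := hdesc i
    have h4 := hPDgap i
    have h5 := hcoef i hi
    nlinarith [mul_le_mul_of_nonneg_left h4 h5]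
  -- induction
  have hrec : ∀ u : ℕ, S ≤ u → primaldualSeq C f x u ≤
      primaldualSeq C f x S * ∏ i ∈ Finset.Ico S u, (1 - η i + M * η i ^ 2 / 2) := by
    intro u hu
    induction u, hu using Nat.le_induction with
    | base => simp
    | succ m hm ih =>
      have hc : 0 ≤ 1 - η m + M * η m ^ 2 / 2 := by
        nlinarith [hη1 m, sq_nonneg (η m), hM.le]
      calc primaldualSeq C f x (m+1)
          ≤ (1 - η m + M * η m ^ 2 / 2) * primaldualSeq C f x m := hstepPD m hm
        _ ≤ (1 - η m + M * η m ^ 2 / 2) *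
            (primaldualSeq C f x S * ∏ i ∈ Finset.Ico S m, (1 - η i + M * η i ^ 2 / 2)) :=
              mul_le_mul_of_nonneg_left ih hc
        _ = primaldualSeq C f x S * ∏ i ∈ Finset.Ico S (m+1), (1 - η i + M * η i ^ 2 / 2) := by
              rw [Finset.prod_Ico_succ_top hm]; ring
  -- bound each factor
  have hc_le : ∀ i : ℕ, S ≤ i → (1 - η i + M * η i ^ 2 / 2) ≤
      ((i:ℝ) / ((i:ℝ) + ℓ)) * Real.exp (M * (ℓ:ℝ) ^ 2 / 2 * (1 / (i:ℝ) ^ 2)) := by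
    intro i hi
    have hiR : (1:ℝ) ≤ (i:ℝ) := le_trans hSR (by exact_mod_cast hi)
    have hA : (0:ℝ) < (i:ℝ) := by linarith
    have hAL : (0:ℝ) < (i:ℝ) + ℓ := by linarith
    have hb : (1:ℝ) - η i = (i:ℝ) / ((i:ℝ) + ℓ) := by
      rw [hη]; field_simp; ring
    have hs0 : (0:ℝ) ≤ M * (ℓ:ℝ) ^ 2 / 2 * (1 / (i:ℝ) ^ 2) := by positivity
    have hexp : 1 + M * (ℓ:ℝ) ^ 2 / 2 * (1 / (i:ℝ) ^ 2) ≤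
        Real.exp (M * (ℓ:ℝ) ^ 2 / 2 * (1 / (i:ℝ) ^ 2)) := by
      linarith [Real.add_one_le_exp (M * (ℓ:ℝ) ^ 2 / 2 * (1 / (i:ℝ) ^ 2))]
    have hmid : (1 - η i + M * η i ^ 2 / 2) ≤
        ((i:ℝ) / ((i:ℝ) + ℓ)) * (1 + M * (ℓ:ℝ) ^ 2 / 2 * (1 / (i:ℝ) ^ 2)) := by
      rw [hb, hη]
      exact factor_ineq (i:ℝ) (ℓ:ℝ) M hA hAL hℓR hM
    calc (1 - η i + M * η i ^ 2 / 2)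
        ≤ ((i:ℝ) / ((i:ℝ) + ℓ)) * (1 + M * (ℓ:ℝ) ^ 2 / 2 * (1 / (i:ℝ) ^ 2)) := hmid
      _ ≤ ((i:ℝ) / ((i:ℝ) + ℓ)) * Real.exp (M * (ℓ:ℝ) ^ 2 / 2 * (1 / (i:ℝ) ^ 2)) :=
          mul_le_mul_of_nonneg_left hexp (by positivity)
  -- product bound
  have hcnn : ∀ i : ℕ, 0 ≤ 1 - η i + M * η i ^ 2 / 2 := by
    intro i
    nlinarith [hη1 i, sq_nonneg (η i), hM.le]
  have hprodc : ∏ i ∈ Finset.Ico S t, (1 - η i + M * η i ^ 2 / 2) ≤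
      (∏ i ∈ Finset.Ico S t, ((i:ℝ) / ((i:ℝ) + ℓ))) *
        Real.exp (M * π ^ 2 * (ℓ:ℝ) ^ 2 / 12) := by
    have hsum : ∑ i ∈ Finset.Ico S t, (M * (ℓ:ℝ) ^ 2 / 2 * (1 / (i:ℝ) ^ 2)) ≤
        M * π ^ 2 * (ℓ:ℝ) ^ 2 / 12 := by
      rw [← Finset.mul_sum]
      have hsum2 : ∑ i ∈ Finset.Ico S t, (1 / (i:ℝ) ^ 2) ≤ π ^ 2 / 6 :=
        sum_le_hasSum _ (fun i _ => by positivity) hasSum_zeta_two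
      calc M * (ℓ:ℝ) ^ 2 / 2 * ∑ i ∈ Finset.Ico S t, (1 / (i:ℝ) ^ 2)
          ≤ M * (ℓ:ℝ) ^ 2 / 2 * (π ^ 2 / 6) :=
            mul_le_mul_of_nonneg_left hsum2 (by positivity)
        _ = M * π ^ 2 * (ℓ:ℝ) ^ 2 / 12 := by ring
    calc ∏ i ∈ Finset.Ico S t, (1 - η i + M * η i ^ 2 / 2)
        ≤ ∏ i ∈ Finset.Ico S t,
            (((i:ℝ) / ((i:ℝ) + ℓ)) * Real.exp (M * (ℓ:ℝ) ^ 2 / 2 * (1 / (i:ℝ) ^ 2))) := by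
          apply Finset.prod_le_prod (fun i _ => hcnn i)
          intro i hi
          exact hc_le i (Finset.mem_Ico.mp hi).1
      _ = (∏ i ∈ Finset.Ico S t, ((i:ℝ) / ((i:ℝ) + ℓ))) *
            Real.exp (∑ i ∈ Finset.Ico S t, (M * (ℓ:ℝ) ^ 2 / 2 * (1 / (i:ℝ) ^ 2))) := by
          rw [Finset.prod_mul_distrib, Real.exp_sum]
      _ ≤ (∏ i ∈ Finset.Ico S t, ((i:ℝ) / ((i:ℝ) + ℓ))) *
            Real.exp (M * π ^ 2 * (ℓ:ℝ) ^ 2 / 12) := by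
          apply mul_le_mul_of_nonneg_left (Real.exp_le_exp.mpr hsum)
          apply Finset.prod_nonneg
          intro i _
          positivity
  -- ratio of step sizes
  have hηratio : (η (t - 1) / η (S - 1)) ^ ℓ =
      (((S:ℝ) + ℓ - 1) / ((t:ℝ) + ℓ - 1)) ^ ℓ := by
    congr 1
    rw [hη, hη]
    have ht' : ((t - 1 : ℕ) : ℝ) = (t:ℝ) - 1 := by
      rw [Nat.cast_sub ht1, Nat.cast_one]
    have hS' : ((S - 1 : ℕ) : ℝ) = (S:ℝ) - 1 := by
      rw [Nat.cast_sub hS1, Nat.cast_one]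
    rw [ht', hS']
    have h1 : (0:ℝ) < (t:ℝ) - 1 + ℓ := by linarith
    have h2 : (0:ℝ) < (S:ℝ) - 1 + ℓ := by linarith
    rw [div_div_div_comm, div_self hℓ0.ne', one_div_div]
    rw [div_eq_div_iff h1.ne' (by linarith : (0:ℝ) < (t:ℝ) + ℓ - 1).ne']
    ring
  -- finish
  have hratio := prod_ratio_le ℓ S t hℓ hS1 ht
  have hE : (0:ℝ) ≤ Real.exp (M * π ^ 2 * (ℓ:ℝ) ^ 2 / 12) := (Real.exp_pos _).le
  calc primaldualSeq C f x t
      ≤ primaldualSeq C f x S * ∏ i ∈ Finset.Ico S t, (1 - η i + M * η i ^ 2 / 2) :=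
        hrec t ht
    _ ≤ primaldualSeq C f x S * ((∏ i ∈ Finset.Ico S t, ((i:ℝ) / ((i:ℝ) + ℓ))) *
          Real.exp (M * π ^ 2 * (ℓ:ℝ) ^ 2 / 12)) :=
        mul_le_mul_of_nonneg_left hprodc (hPD0 S)
    _ ≤ primaldualSeq C f x S * ((((S:ℝ) + ℓ - 1) / ((t:ℝ) + ℓ - 1)) ^ ℓ *
          Real.exp (M * π ^ 2 * (ℓ:ℝ) ^ 2 / 12)) := by
        apply mul_le_mul_of_nonneg_left _ (hPD0 S)
        exact mul_le_mul_of_nonneg_right hratio hE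
    _ = primaldualSeq C f x S * (η (t - 1) / η (S - 1)) ^ ℓ *
          Real.exp (M * π ^ 2 * (ℓ:ℝ) ^ 2 / 12) := by
        rw [hηratio]; ring
end
end

section
/- Let ℓ ∈ ℕ with ℓ ≥ 1 and define η_t = ℓ/(t+ℓ) for t ∈ ℕ. Then for all S, t ∈ ℕ with 1 ≤ S ≤ t, it holds that ∏_{i=S}^{t} (1 − η_i) ≤ (η_t/η_{S−1})^ℓ. -/
open Finset Real

lemma bernoulli_key (ℓ : ℕ) (c : ℝ) (hc : 1 ≤ c) : (c - ℓ)/c ≤ ((c-1)/c)^ℓ := by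
  have hc0 : (0:ℝ) < c := lt_of_lt_of_le one_pos hc
  have ha : (-2:ℝ) ≤ -1/c := by
    have h1 : 1/c ≤ 1 := by rw [div_le_one hc0]; exact hc
    rw [neg_div]; linarith
  have h := one_add_mul_le_pow ha ℓ
  calc (c-ℓ)/c = 1 + ℓ * (-1/c) := by field_simp; ring
    _ ≤ (1 + (-1/c))^ℓ := h
    _ = ((c-1)/c)^ℓ := by
        congr 1
        field_simp
        ring

/-- **Lemma (telescoping product, simple form).** For `η_t = ℓ/(t+ℓ)` and `1 ≤ S ≤ t`:
`∏_{i=S}^{t} (1 - η_i) ≤ (η_t / η_{S-1})^ℓ`. -/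
theorem telescope_simple
    (ℓ : ℕ) (hℓ : 1 ≤ ℓ)
    (η : ℕ → ℝ) (hη : ∀ t : ℕ, η t = (ℓ : ℝ) / ((t : ℝ) + ℓ))
    (S t : ℕ) (hS : 1 ≤ S) (hSt : S ≤ t) :
    ∏ i ∈ Finset.Icc S t, (1 - η i) ≤ (η t / η (S - 1)) ^ ℓ := by
  have hℓ0 : (0:ℝ) < ℓ := by exact_mod_cast hℓ
  have hden : ∀ n : ℕ, (0:ℝ) < (n:ℝ) + ℓ := fun n => by positivity
  have hone : ∀ n : ℕ, 1 - η n = (n:ℝ) / ((n:ℝ) + ℓ) := by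
    intro n; rw [hη n]; field_simp; ring
  have hcast : ((S - 1 : ℕ) : ℝ) = (S:ℝ) - 1 := by
    have : (S - 1 : ℕ) + 1 = S := Nat.succ_pred_eq_of_pos hS
    push_cast [this]
    linarith [(by exact_mod_cast congrArg (Nat.cast (R := ℝ)) this : ((S-1:ℕ):ℝ) + 1 = S)]
  have hratio : ∀ n : ℕ, η n / η (S - 1) = ((S:ℝ) - 1 + ℓ) / ((n:ℝ) + ℓ) := by
    intro n
    rw [hη, hη, hcast]
    rw [div_div_div_eq]
    rw [mul_comm ((ℓ:ℝ)) ((S:ℝ) - 1 + ℓ), mul_div_mul_right _ _ (ne_of_gt hℓ0)]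
  induction t, hSt using Nat.le_induction with
  | base =>
      rw [Finset.Icc_self, Finset.prod_singleton, hone, hratio]
      have := bernoulli_key ℓ ((S:ℝ) + ℓ) (by have := hS; push_cast; nlinarith)
      have e1 : ((S:ℝ) + ℓ - ℓ) = S := by ring
      have e2 : ((S:ℝ) + ℓ - 1) = (S:ℝ) - 1 + ℓ := by ring
      rwa [e1, e2] at this
  | succ t ht ih =>
      rw [Finset.prod_Icc_succ_top (le_trans ht (Nat.le_succ t))]
      have h1 : 1 - η (t+1) ≤ (η (t+1) / η t)^ℓ := by
        have hr : η (t+1) / η t = ((t:ℝ) + ℓ) / ((t:ℝ) + 1 + ℓ) := by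
          rw [hη, hη]; push_cast
          rw [div_div_div_eq, mul_comm ((ℓ:ℝ)) ((t:ℝ) + ℓ), mul_div_mul_right _ _ (ne_of_gt hℓ0)]
        rw [hone, hr]
        have := bernoulli_key ℓ ((t:ℝ) + 1 + ℓ) (by have := hden t; nlinarith)
        have e1 : ((t:ℝ) + 1 + ℓ - ℓ) = (t:ℝ) + 1 := by ring
        have e2 : ((t:ℝ) + 1 + ℓ - 1) = (t:ℝ) + ℓ := by ring
        rw [e1, e2] at this
        push_cast
        exact this
      have hη1pos : 0 ≤ 1 - η (t+1) := by
        rw [hone]; positivity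
      have hpownn : (0:ℝ) ≤ (η t / η (S-1))^ℓ :=
        pow_nonneg (div_nonneg (by rw [hη]; positivity) (by rw [hη]; positivity)) ℓ
      calc (∏ i ∈ Finset.Icc S t, (1 - η i)) * (1 - η (t+1))
          ≤ (η t / η (S-1))^ℓ * (η (t+1) / η t)^ℓ := by
            apply mul_le_mul ih h1 hη1pos hpownn
        _ = (η (t+1) / η (S-1))^ℓ := by
            rw [← mul_pow]
            congr 1
            have hηt : η t ≠ 0 := by rw [hη]; exact ne_of_gt (div_pos hℓ0 (hden t))
            have hηS : η (S-1) ≠ 0 := by rw [hη]; exact ne_of_gt (div_pos hℓ0 (hden _))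
            field_simp
end

section
/- Let ℓ ∈ ℕ with ℓ ≥ 1 and define η_t = ℓ/(t+ℓ) for t ∈ ℕ. Then for all S, t ∈ ℕ with 1 ≤ S ≤ t and every ε ∈ [0, ℓ], it holds that ∏_{i=S}^{t} (1 − (1 − ε/ℓ)·η_i) ≤ (η_t/η_{S−1})^{ℓ−ε} · exp(εℓ/S). -/
open Finset Set Real

/-- Pointwise key inequality: `(x-a)/x ≤ ((x-1)/x)^a · exp((l-a)(1/(x-1)-1/x))`. -/
lemma telescope_key_aux (x a l : ℝ) (hx : 2 ≤ x) (ha0 : 0 ≤ a) (hal : a ≤ l) (hl : 1 ≤ l)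
    (hlx : l ≤ x - 1) :
    (x - a) / x ≤ ((x - 1) / x) ^ (a : ℝ) * Real.exp ((l - a) * (1/(x-1) - 1/x)) := by
  have hx0 : (0:ℝ) < x := by linarith
  have hx1 : (0:ℝ) < x - 1 := by linarith
  have hxa : (0:ℝ) < x - a := by linarith
  have h1 : Real.log (x - a) - Real.log (x - 1) ≤ (1 - a) / (x - 1) := by
    have h := Real.log_le_sub_one_of_pos (show 0 < (x - a)/(x-1) by positivity)
    rw [Real.log_div (by linarith) (by linarith)] at h
    have he : (x - a)/(x-1) - 1 = (1 - a)/(x-1) := by field_simp; ring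
    linarith [he ▸ h]
  have h2 : Real.log (x - 1) - Real.log x ≤ -(1/x) := by
    have h := Real.log_le_sub_one_of_pos (show 0 < (x - 1)/x by positivity)
    rw [Real.log_div (by linarith) (by linarith)] at h
    have he : (x - 1)/x - 1 = -(1/x) := by field_simp; ring
    linarith [he ▸ h]
  have h3 : Real.log x - Real.log (x - 1) ≤ 1/(x-1) := by
    have h := Real.log_le_sub_one_of_pos (show 0 < x/(x-1) by positivity)
    rw [Real.log_div (by linarith) (by linarith)] at h
    have he : x/(x-1) - 1 = 1/(x-1) := by field_simp; ring
    linarith [he ▸ h]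
  -- main log inequality
  have hd : (0:ℝ) ≤ 1/(x-1) - 1/x := by
    have : (1:ℝ)/x ≤ 1/(x-1) := by
      apply one_div_le_one_div_of_le hx1; linarith
    linarith
  have hlog : Real.log (x - a) - Real.log x ≤
      a * (Real.log (x-1) - Real.log x) + (l - a) * (1/(x-1) - 1/x) := by
    set L := Real.log x - Real.log (x-1) with hL
    set m := 1/(x-1) - L with hm
    have hm0 : 0 ≤ m := by simp only [hm]; linarith
    have hmd : m ≤ 1/(x-1) - 1/x := by simp only [hm, hL]; linarith
    have key : (1 - a) * m ≤ (l - a) * (1/(x-1) - 1/x) := by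
      rcases le_or_gt a 1 with h | h
      · nlinarith [mul_le_mul_of_nonneg_left hmd (show (0:ℝ) ≤ 1 - a by linarith),
          mul_le_mul_of_nonneg_right (show 1 - a ≤ l - a by linarith) hd]
      · nlinarith [mul_nonneg hm0 (show (0:ℝ) ≤ a - 1 by linarith),
          mul_nonneg (show (0:ℝ) ≤ l - a by linarith) hd]
    have : Real.log (x - a) - Real.log x ≤ (1 - a)/(x-1) - L := by
      simp only [hL]; linarith
    have hexp : (1 - a)/(x-1) - L = (1 - a) * m + a * (-L) := by
      simp only [hm]; ring
    rw [hexp] at this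
    calc Real.log (x - a) - Real.log x ≤ (1 - a) * m + a * (-L) := this
      _ ≤ (l - a) * (1/(x-1) - 1/x) + a * (-L) := by linarith
      _ = a * (Real.log (x-1) - Real.log x) + (l - a) * (1/(x-1) - 1/x) := by
          simp only [hL]; ring
  -- exponentiate
  have hlhs : (x - a)/x = Real.exp (Real.log (x - a) - Real.log x) := by
    rw [Real.exp_sub, Real.exp_log hxa, Real.exp_log hx0]
  have hrhs : ((x - 1) / x) ^ (a : ℝ) * Real.exp ((l - a) * (1/(x-1) - 1/x))
      = Real.exp (a * (Real.log (x-1) - Real.log x) + (l - a) * (1/(x-1) - 1/x)) := by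
    rw [Real.exp_add, Real.rpow_def_of_pos (by positivity),
      Real.log_div (by linarith) (by linarith), mul_comm a]
  rw [hlhs, hrhs]
  exact Real.exp_le_exp.mpr hlog

/-- Telescoping product. -/
lemma telescope_prod_aux (c : ℝ) (hc : 1 ≤ c) (S : ℕ) (hS : 1 ≤ S) :
    ∀ t : ℕ, S ≤ t → ∏ i ∈ Finset.Icc S t, (((i:ℝ) + c - 1) / ((i:ℝ) + c))
      = ((S:ℝ) + c - 1) / ((t:ℝ) + c) := by
  intro t ht
  induction t, ht using Nat.le_induction with
  | base => simp
  | succ n hn ih =>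
    rw [Finset.prod_Icc_succ_top (by omega), ih]
    have h1 : (0:ℝ) < (n:ℝ) + c := by positivity
    have h2 : (0:ℝ) < (n:ℝ) + 1 + c := by positivity
    push_cast
    field_simp
    ring

/-- Telescoping sum. -/
lemma telescope_sum_aux (c : ℝ) (hc : 1 ≤ c) (S : ℕ) (hS : 1 ≤ S) :
    ∀ t : ℕ, S ≤ t → ∑ i ∈ Finset.Icc S t, (1/((i:ℝ) + c - 1) - 1/((i:ℝ) + c))
      = 1/((S:ℝ) + c - 1) - 1/((t:ℝ) + c) := by
  intro t ht
  induction t, ht using Nat.le_induction with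
  | base => simp
  | succ n hn ih =>
    rw [Finset.sum_Icc_succ_top (by omega), ih]
    have h1 : (0:ℝ) < (n:ℝ) + c := by positivity
    push_cast
    ring_nf

/-- **Lemma (telescoping product, general form).** For `η_t = ℓ/(t+ℓ)`, `1 ≤ S ≤ t`, `ε ∈ [0,ℓ]`:
`∏_{i=S}^{t} (1 - (1 - ε/ℓ)η_i) ≤ (η_t / η_{S-1})^{ℓ-ε} · exp(εℓ/S)`. -/
theorem telescope_general
    (ℓ : ℕ) (hℓ : 1 ≤ ℓ)
    (η : ℕ → ℝ) (hη : ∀ t : ℕ, η t = (ℓ : ℝ) / ((t : ℝ) + ℓ))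
    (S t : ℕ) (hS : 1 ≤ S) (hSt : S ≤ t)
    (ε : ℝ) (hε : ε ∈ Icc (0 : ℝ) (ℓ : ℝ)) :
    ∏ i ∈ Finset.Icc S t, (1 - (1 - ε / ℓ) * η i) ≤
      (η t / η (S - 1)) ^ ((ℓ : ℝ) - ε) * Real.exp (ε * ℓ / S) := by
  obtain ⟨hε0, hεℓ⟩ := hε
  have hℓR : (1:ℝ) ≤ (ℓ:ℝ) := by exact_mod_cast hℓ
  have hSR : (1:ℝ) ≤ (S:ℝ) := by exact_mod_cast hS
  have hℓ0 : (0:ℝ) < (ℓ:ℝ) := by linarith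
  -- rewrite the ratio of step sizes
  have hcast : ((S - 1 : ℕ) : ℝ) = (S:ℝ) - 1 := by
    have : ((S - 1 : ℕ) : ℝ) = (S:ℝ) - 1 := by
      rw [Nat.cast_sub hS]; norm_num
    exact this
  have hA : (0:ℝ) < (S:ℝ) - 1 + ℓ := by linarith
  have hB : (0:ℝ) < (t:ℝ) + ℓ := by positivity
  have hratio : η t / η (S - 1) = ((S:ℝ) - 1 + ℓ) / ((t:ℝ) + ℓ) := by
    rw [hη, hη, hcast]
    rw [div_div_div_eq]
    rw [div_eq_div_iff (by positivity) (by positivity)]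
    ring
  rw [hratio]
  -- per-factor bound
  have hfac : ∀ i ∈ Finset.Icc S t,
      (1 - (1 - ε / ℓ) * η i) ≤
        (((i:ℝ) + ℓ - 1) / ((i:ℝ) + ℓ)) ^ ((ℓ:ℝ) - ε)
          * Real.exp (ε * (1/((i:ℝ) + ℓ - 1) - 1/((i:ℝ) + ℓ))) := by
    intro i hi
    have hiS : S ≤ i := (Finset.mem_Icc.mp hi).1
    have hiR : (1:ℝ) ≤ (i:ℝ) := by
      have : 1 ≤ i := le_trans hS hiS
      exact_mod_cast this
    have hx : (2:ℝ) ≤ (i:ℝ) + ℓ := by linarith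
    have hfe : 1 - (1 - ε / ℓ) * η i = ((i:ℝ) + ℓ - ((ℓ:ℝ) - ε)) / ((i:ℝ) + ℓ) := by
      rw [hη]
      field_simp
    rw [hfe]
    have := telescope_key_aux ((i:ℝ) + ℓ) ((ℓ:ℝ) - ε) (ℓ:ℝ) hx (by linarith)
      (by linarith) hℓR (by linarith)
    simpa using this
  have hnn : ∀ i ∈ Finset.Icc S t, (0:ℝ) ≤ 1 - (1 - ε / ℓ) * η i := by
    intro i hi
    have hiS : S ≤ i := (Finset.mem_Icc.mp hi).1
    have hiR : (1:ℝ) ≤ (i:ℝ) := by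
      have : 1 ≤ i := le_trans hS hiS
      exact_mod_cast this
    have hfe : 1 - (1 - ε / ℓ) * η i = ((i:ℝ) + ℓ - ((ℓ:ℝ) - ε)) / ((i:ℝ) + ℓ) := by
      rw [hη]; field_simp
    rw [hfe]
    apply div_nonneg <;> linarith
  calc ∏ i ∈ Finset.Icc S t, (1 - (1 - ε / ℓ) * η i)
      ≤ ∏ i ∈ Finset.Icc S t,
          ((((i:ℝ) + ℓ - 1) / ((i:ℝ) + ℓ)) ^ ((ℓ:ℝ) - ε)
            * Real.exp (ε * (1/((i:ℝ) + ℓ - 1) - 1/((i:ℝ) + ℓ)))) :=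
        Finset.prod_le_prod hnn hfac
    _ = (∏ i ∈ Finset.Icc S t, (((i:ℝ) + ℓ - 1) / ((i:ℝ) + ℓ))) ^ ((ℓ:ℝ) - ε)
          * Real.exp (∑ i ∈ Finset.Icc S t, ε * (1/((i:ℝ) + ℓ - 1) - 1/((i:ℝ) + ℓ))) := by
        rw [Finset.prod_mul_distrib, Real.exp_sum,
          Real.finset_prod_rpow _ _ (fun i hi => by
            have hiS : S ≤ i := (Finset.mem_Icc.mp hi).1
            have hiR : (1:ℝ) ≤ (i:ℝ) := by
              have : 1 ≤ i := le_trans hS hiS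
              exact_mod_cast this
            have h1 : (0:ℝ) < (i:ℝ) + ℓ := by positivity
            apply div_nonneg <;> linarith)]
    _ ≤ (((S:ℝ) - 1 + ℓ) / ((t:ℝ) + ℓ)) ^ ((ℓ:ℝ) - ε) * Real.exp (ε * ℓ / S) := by
        rw [telescope_prod_aux (ℓ:ℝ) hℓR S hS t hSt,
          ← Finset.mul_sum, telescope_sum_aux (ℓ:ℝ) hℓR S hS t hSt]
        have hbase : ((S:ℝ) + ℓ - 1) / ((t:ℝ) + ℓ) = ((S:ℝ) - 1 + ℓ) / ((t:ℝ) + ℓ) := by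
          ring_nf
        rw [hbase]
        apply mul_le_mul_of_nonneg_left _ (Real.rpow_nonneg (by positivity) _)
        apply Real.exp_le_exp.mpr
        have h1 : (0:ℝ) < (S:ℝ) + ℓ - 1 := by linarith
        have h2 : 1/((S:ℝ) + ℓ - 1) ≤ (ℓ:ℝ)/(S:ℝ) := by
          rw [div_le_div_iff₀ h1 (by linarith)]
          nlinarith
        have h3 : (0:ℝ) < 1/((t:ℝ) + ℓ) := by positivity
        calc ε * (1/((S:ℝ) + ℓ - 1) - 1/((t:ℝ) + ℓ))
            ≤ ε * ((ℓ:ℝ)/(S:ℝ)) := by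
              apply mul_le_mul_of_nonneg_left _ hε0
              linarith
          _ = ε * ℓ / S := by ring
end

section
/- Let C ⊆ ℝ^n be a compact convex set, f : ℝ^n → ℝ convex and differentiable on an open set containing C, and suppose (C,f) satisfies both the strong (M,0)-growth property and the weak (M,r)-growth property for some M > 0 and r ∈ [0,1). Let ℓ ∈ ℕ with ℓ ≥ 1, η_t = ℓ/(t+ℓ), S = max{1, ⌈ℓM/2 − ℓ⌉}, and ε ∈ (0,ℓ). Then the iterates of the Frank–Wolfe algorithm with these step sizes satisfy, for all t ≥ S, subopt_t ≤ exp(εℓ/S) · max{ subopt_S · (η_{t−1}/η_{S−1})^{ℓ−ε}, η_{t−1}^{min{ℓ−ε, 1/(1−r), 2}} · ( (ℓM/(2ε))^{1/(1−r)} + M/2 ) }. -/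
open Set Finset Real Pointwise

noncomputable section

variable {n : ℕ}

open Filter
lemma aux_bern {c y B : ℝ} (hy0 : 0 < y) (hy1 : y < 1) (hc0 : 0 < c)
    (hB : c * (1 - c) ≤ B) (hB0 : 0 ≤ B) :
    1 - c * y ≤ (1 - y) ^ c * Real.exp (B * (y ^ 2 / (1 - y))) := by
  have h1y : (0:ℝ) < 1 - y := by linarith
  rcases le_or_gt 1 c with hc1 | hc1
  · have h1 : 1 + c * (-y) ≤ (1 + (-y)) ^ c :=
      one_add_mul_self_le_rpow_one_add (by linarith) hc1
    have h2 : (1:ℝ) ≤ Real.exp (B * (y ^ 2 / (1 - y))) :=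
      Real.one_le_exp (by positivity)
    calc 1 - c * y = 1 + c * (-y) := by ring
      _ ≤ (1 + (-y)) ^ c := h1
      _ = (1 - y) ^ c := by ring_nf
      _ ≤ (1 - y) ^ c * Real.exp (B * (y ^ 2 / (1 - y))) :=
          le_mul_of_one_le_right (Real.rpow_nonneg h1y.le c) h2
  · set z : ℝ := y / (1 - y) with hzdef
    have hz0 : 0 ≤ z := by positivity
    have hb : (1 + z) ^ c ≤ 1 + c * z :=
      rpow_one_add_le_one_add_mul_self (by linarith) hc0.le hc1.le
    have hpos : (0:ℝ) < 1 + c * z := by positivity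
    have h1zpos : (0:ℝ) < 1 + z := by linarith
    have hinv : (1 + c * z)⁻¹ ≤ (1 - y) ^ c := by
      have h1y' : (1 - y) = (1 + z)⁻¹ := by rw [hzdef]; field_simp; ring
      have h2 : (1 - y) ^ c = ((1 + z) ^ c)⁻¹ := by
        rw [h1y', Real.inv_rpow h1zpos.le]
      rw [h2]
      exact inv_anti₀ (Real.rpow_pos_of_pos h1zpos c) hb
    have hkey : (1 - c * y) * (1 + c * z) = 1 + c * (1 - c) * (y ^ 2 / (1 - y)) := by
      rw [hzdef]; field_simp; ring
    have hle : (1 - c * y) * (1 + c * z) ≤ Real.exp (B * (y ^ 2 / (1 - y))) := by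
      rw [hkey]
      have h1 : c * (1 - c) * (y ^ 2 / (1 - y)) ≤ B * (y ^ 2 / (1 - y)) :=
        mul_le_mul_of_nonneg_right hB (by positivity)
      linarith [Real.add_one_le_exp (B * (y ^ 2 / (1 - y)))]
    calc 1 - c * y ≤ Real.exp (B * (y ^ 2 / (1 - y))) / (1 + c * z) :=
          (le_div_iff₀ hpos).mpr hle
      _ = Real.exp (B * (y ^ 2 / (1 - y))) * (1 + c * z)⁻¹ := div_eq_mul_inv _ _
      _ ≤ Real.exp (B * (y ^ 2 / (1 - y))) * (1 - y) ^ c :=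
          mul_le_mul_of_nonneg_left hinv (Real.exp_nonneg _)
      _ = (1 - y) ^ c * Real.exp (B * (y ^ 2 / (1 - y))) := mul_comm _ _

lemma aux_factor {c a B : ℝ} (ha : 2 ≤ a) (hc0 : 0 < c)
    (hB : c * (1 - c) ≤ B) (hB0 : 0 ≤ B) :
    (a - c) / a ≤ ((a - 1) / a) ^ c * Real.exp (B * (1 / ((a - 1) * a))) := by
  have ha0 : (0:ℝ) < a := by linarith
  have ha1 : (0:ℝ) < a - 1 := by linarith
  have h := aux_bern (c := c) (y := 1 / a) (B := B) (by positivity)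
    (by rw [div_lt_one ha0]; linarith) hc0 hB hB0
  have e1 : 1 - c * (1 / a) = (a - c) / a := by field_simp
  have e2 : 1 - 1 / a = (a - 1) / a := by field_simp
  have e3 : (1 / a) ^ 2 / ((a - 1) / a) = 1 / ((a - 1) * a) := by
    field_simp
  rw [e2] at h
  rw [e1, e3] at h
  exact h

lemma grad_convex_le {n : ℕ} {C U : Set (Eucl n)} {f : Eucl n → ℝ}
    (hfconv : ConvexOn ℝ C f) (hUopen : IsOpen U) (hCU : C ⊆ U)
    (hfdiff : DifferentiableOn ℝ f U) {p q : Eucl n} (hp : p ∈ C) (hq : q ∈ C) :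
    (inner ℝ (gradient f p) (q - p) : ℝ) ≤ f q - f p := by
  have hpU : U ∈ nhds p := hUopen.mem_nhds (hCU hp)
  have hdp : DifferentiableAt ℝ f p := hfdiff.differentiableAt hpU
  have hfd : HasFDerivAt f (fderiv ℝ f p) p := hdp.hasFDerivAt
  have hA : HasDerivAt (fun s : ℝ => p + s • (q - p)) (q - p) 0 := by
    simpa using ((hasDerivAt_id (0:ℝ)).smul_const (q - p)).const_add p
  have hφ : HasDerivAt (fun s : ℝ => f (p + s • (q - p))) (fderiv ℝ f p (q - p)) 0 := by
    have hfd' : HasFDerivAt f (fderiv ℝ f p) ((fun s : ℝ => p + s • (q - p)) 0) := by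
      simpa using hfd
    exact hfd'.comp_hasDerivAt 0 hA
  have hslope : ∀ s ∈ Set.Ioo (0:ℝ) 1,
      slope (fun s : ℝ => f (p + s • (q - p))) 0 s ≤ f q - f p := by
    intro s hs
    have hs0 : (0:ℝ) < s := hs.1
    have hmem := hfconv.2 hp hq (by linarith [hs.2] : (0:ℝ) ≤ 1 - s) hs0.le (by ring)
    have heq : (1 - s) • p + s • q = p + s • (q - p) := by
      rw [smul_sub, sub_smul, one_smul]; abel
    rw [heq] at hmem
    have h0 : p + (0:ℝ) • (q - p) = p := by simp
    simp only [smul_eq_mul] at hmem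
    rw [slope_def_field, h0, sub_zero, div_le_iff₀ hs0]
    have e1 : (1 - s) * f p + s * f q = f p + s * (f q - f p) := by ring
    have e2 : (f q - f p) * s = s * (f q - f p) := by ring
    rw [e1] at hmem
    linarith
  have htend : Tendsto (slope (fun s : ℝ => f (p + s • (q - p))) 0)
      (nhdsWithin 0 (Set.Ioi (0:ℝ))) (nhds (fderiv ℝ f p (q - p))) :=
    (hasDerivAt_iff_tendsto_slope.mp hφ).mono_left
      (nhdsWithin_mono 0 (fun s hs => ne_of_gt hs))
  have hev : ∀ᶠ s in nhdsWithin 0 (Set.Ioi (0:ℝ)),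
      slope (fun s : ℝ => f (p + s • (q - p))) 0 s ≤ f q - f p := by
    filter_upwards [self_mem_nhdsWithin,
      (eventually_lt_nhds (by norm_num : (0:ℝ) < 1)).filter_mono nhdsWithin_le_nhds]
      with s h1 h2
    exact hslope s ⟨h1, h2⟩
  have hfin : fderiv ℝ f p (q - p) ≤ f q - f p := le_of_tendsto htend hev
  have hgrad : (inner ℝ (gradient f p) (q - p) : ℝ) = fderiv ℝ f p (q - p) := by
    show (inner ℝ ((InnerProductSpace.toDual ℝ _).symm (fderiv ℝ f p)) (q - p) : ℝ) = _
    exact InnerProductSpace.toDual_symm_apply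
  linarith [hgrad ▸ hfin]

set_option maxHeartbeats 2000000 in
/-- **Theorem (weak `(M,r)`-growth, suboptimality rate).** -/
theorem fw_weak_growth_rate
    (n : ℕ) (C : Set (Eucl n)) (f : Eucl n → ℝ)
    (hCcomp : IsCompact C) (hCconv : Convex ℝ C) (hCne : C.Nonempty)
    (hfconv : ConvexOn ℝ C f)
    (U : Set (Eucl n)) (hUopen : IsOpen U) (hCU : C ⊆ U)
    (hfdiff : DifferentiableOn ℝ f U)
    (M r : ℝ) (hM : 0 < M) (hr : r ∈ Ico (0 : ℝ) 1)
    (hstrong : StrongGrowth C f M 0) (hweak : WeakGrowth C f M r)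
    (ℓ : ℕ) (hℓ : 1 ≤ ℓ)
    (η : ℕ → ℝ) (hη : ∀ t : ℕ, η t = (ℓ : ℝ) / ((t : ℝ) + ℓ))
    (x v : ℕ → Eucl n)
    (hx0 : x 0 ∈ C)
    (hv : ∀ t : ℕ, IsFWVertex C f (x t) (v t))
    (hstep : ∀ t : ℕ, x (t + 1) = x t + η t • (v t - x t))
    (S : ℕ) (hS : S = max 1 (⌈(ℓ : ℝ) * M / 2 - (ℓ : ℝ)⌉.toNat))
    (ε : ℝ) (hε : ε ∈ Ioo (0 : ℝ) (ℓ : ℝ))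
    (t : ℕ) (ht : S ≤ t) :
    suboptF C f (x t) ≤
      Real.exp (ε * ℓ / S) *
        max (suboptF C f (x S) * (η (t - 1) / η (S - 1)) ^ ((ℓ : ℝ) - ε))
          (η (t - 1) ^ min (min ((ℓ : ℝ) - ε) (1 / (1 - r))) 2 *
            (((ℓ : ℝ) * M / (2 * ε)) ^ (1 / (1 - r)) + M / 2)) := by
  obtain ⟨hε0, hεℓ⟩ := hε
  have hS1 : 1 ≤ S := by rw [hS]; exact le_max_left 1 _
  have hℓR : (1:ℝ) ≤ (ℓ:ℝ) := by exact_mod_cast hℓ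
  have hr0 := hr.1
  have hr1 : (0:ℝ) < 1 - r := by linarith [hr.2]
  set c : ℝ := (ℓ:ℝ) - ε with hcdef
  have hc0 : 0 < c := by rw [hcdef]; linarith
  set α : ℝ := min (min c (1/(1-r))) 2 with hαdef
  have hα2 : α ≤ 2 := min_le_right _ _
  have hαc : α ≤ c := le_trans (min_le_left _ _) (min_le_left _ _)
  have hαr : α ≤ 1/(1-r) := le_trans (min_le_left _ _) (min_le_right _ _)
  set K : ℝ := ((ℓ:ℝ) * M / (2 * ε)) ^ (1 / (1 - r)) + M / 2 with hKdef
  have hQ0 : (0:ℝ) ≤ ((ℓ:ℝ) * M / (2 * ε)) ^ (1 / (1 - r)) :=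
    Real.rpow_nonneg (by positivity) _
  have hK0 : 0 ≤ K := by rw [hKdef]; linarith
  have hη0 : ∀ u : ℕ, 0 < η u := by
    intro u; rw [hη u]; positivity
  have hη1 : ∀ u : ℕ, η u ≤ 1 := by
    intro u; rw [hη u, div_le_one (by positivity)]
    linarith [Nat.cast_nonneg (α := ℝ) u]
  have hIcc : ∀ u : ℕ, η u ∈ Icc (0:ℝ) 1 := fun u => ⟨(hη0 u).le, hη1 u⟩
  have hmem : ∀ u : ℕ, x u ∈ C := by
    intro u; induction u with
    | zero => exact hx0
    | succ u ih => rw [hstep u]; exact hCconv.add_smul_sub_mem ih (hv u).1 (hIcc u)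
  have hContC : ContinuousOn f C := hfdiff.continuousOn.mono hCU
  have hbdd : BddBelow (f '' C) := (hCcomp.image_of_continuousOn hContC).bddBelow
  have himg : (f '' C).Nonempty := hCne.image f
  have hsub0 : ∀ u : ℕ, 0 ≤ suboptF C f (x u) := fun u =>
    sub_nonneg.2 (csInf_le hbdd ⟨x u, hmem u, rfl⟩)
  have hgap_eq : ∀ u : ℕ, gapF C f (x u) = (inner ℝ (gradient f (x u)) (x u - v u) : ℝ) := by
    intro u
    refine IsGreatest.csSup_eq ⟨⟨v u, (hv u).1, rfl⟩, ?_⟩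
    rintro w ⟨y, hy, rfl⟩
    have h2 := (hv u).2 y hy
    simp only [inner_sub_right]
    linarith
  have hgap_ge : ∀ u : ℕ, ∀ y ∈ C,
      (inner ℝ (gradient f (x u)) (x u - y) : ℝ) ≤ gapF C f (x u) := by
    intro u y hy
    rw [hgap_eq u]
    have h2 := (hv u).2 y hy
    simp only [inner_sub_right]
    linarith
  have hgap0 : ∀ u : ℕ, 0 ≤ gapF C f (x u) := by
    intro u
    have := hgap_ge u (x u) (hmem u)
    simpa using this
  have hgapsub : ∀ u : ℕ, suboptF C f (x u) ≤ gapF C f (x u) := by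
    intro u
    have h1 : ∀ w ∈ f '' C, f (x u) - gapF C f (x u) ≤ w := by
      rintro w ⟨y, hy, rfl⟩
      have h2 := grad_convex_le hfconv hUopen hCU hfdiff (hmem u) hy
      have h3 := hgap_ge u y hy
      simp only [inner_sub_right] at h2 h3
      linarith
    have h4 : f (x u) - gapF C f (x u) ≤ sInf (f '' C) := le_csInf himg h1
    simp only [suboptF]
    linarith
  have hdescent : ∀ u : ℕ, suboptF C f (x (u+1)) =
      suboptF C f (x u) - η u * gapF C f (x u) + bregmanD f (x (u+1)) (x u) := by
    intro u
    have hinner : (inner ℝ (gradient f (x u)) (x (u+1) - x u) : ℝ)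
        = η u * (inner ℝ (gradient f (x u)) (v u - x u) : ℝ) := by
      rw [hstep u, add_sub_cancel_left, real_inner_smul_right]
    simp only [suboptF, bregmanD]
    rw [hinner, hgap_eq u]
    simp only [inner_sub_right]
    ring
  have hD_strong : ∀ u : ℕ, bregmanD f (x (u+1)) (x u) ≤ M * η u ^ 2 / 2 := by
    intro u
    have h := hstrong (x u) (hmem u) (v u) (hv u) (η u) (hIcc u)
    rw [Real.rpow_zero, mul_one] at h
    rw [hstep u]
    exact h
  have hD_weak : ∀ u : ℕ, bregmanD f (x (u+1)) (x u) * suboptF C f (x u) ^ (1-r)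
      ≤ M * η u ^ 2 / 2 * gapF C f (x u) := by
    intro u
    have h := hweak (x u) (hmem u) (v u) (hv u) (η u) (hIcc u)
    rw [hstep u]
    exact h
  -- step bound, case A
  have hstepA : ∀ u : ℕ, η u * ℓ * M / (2*ε) ≤ suboptF C f (x u) ^ (1-r) →
      suboptF C f (x (u+1)) ≤ ((u:ℝ)+ε)/((u:ℝ)+ℓ) * suboptF C f (x u) := by
    intro u hcase
    have hηu := hη0 u
    have hT : (0:ℝ) < η u * ℓ * M / (2*ε) := by positivity
    have hgpos : 0 < suboptF C f (x u) := by
      rcases (hsub0 u).lt_or_eq with h | h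
      · exact h
      · exfalso
        rw [← h, Real.zero_rpow (ne_of_gt hr1)] at hcase
        linarith
    have hgp : 0 < suboptF C f (x u) ^ (1-r) := Real.rpow_pos_of_pos hgpos _
    have hga := hgap0 u
    have hD2 : bregmanD f (x (u+1)) (x u)
        ≤ M * η u ^ 2 / 2 * gapF C f (x u) / suboptF C f (x u) ^ (1-r) :=
      (le_div_iff₀ hgp).mpr (hD_weak u)
    have hD3 : M * η u ^ 2 / 2 * gapF C f (x u) / suboptF C f (x u) ^ (1-r)
        ≤ M * η u ^ 2 / 2 * gapF C f (x u) / (η u * ℓ * M / (2*ε)) := by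
      apply div_le_div_of_nonneg_left (mul_nonneg (by positivity) hga) hT hcase
    have hD4 : M * η u ^ 2 / 2 * gapF C f (x u) / (η u * ℓ * M / (2*ε))
        = η u * ε * gapF C f (x u) / ℓ := by
      field_simp
    rw [hD4] at hD3
    have hexp : suboptF C f (x (u+1)) ≤ suboptF C f (x u)
        - η u * (1 - ε/ℓ) * gapF C f (x u) := by
      have e1 : η u * (1 - ε/ℓ) * gapF C f (x u)
          = η u * gapF C f (x u) - η u * ε * gapF C f (x u) / ℓ := by
        field_simp
      linarith [hdescent u, hD2.trans hD3]
    have hεℓ1 : ε/ℓ ≤ 1 := by rw [div_le_one (by positivity)]; linarith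
    have hcoef : 0 ≤ η u * (1 - ε/ℓ) := mul_nonneg hηu.le (by linarith)
    have hfinal : suboptF C f (x (u+1)) ≤ (1 - η u * (1 - ε/ℓ)) * suboptF C f (x u) := by
      have h5 : η u * (1 - ε/ℓ) * suboptF C f (x u)
          ≤ η u * (1 - ε/ℓ) * gapF C f (x u) :=
        mul_le_mul_of_nonneg_left (hgapsub u) hcoef
      nlinarith [hexp]
    refine hfinal.trans (le_of_eq ?_)
    rw [hη u]
    have hl0 : (ℓ:ℝ) ≠ 0 := by positivity
    have hul : ((u:ℝ)+ℓ) ≠ 0 := by positivity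
    congr 1
    field_simp
    ring
  -- step bound, case B
  have hstepB : ∀ u : ℕ, suboptF C f (x u) ^ (1-r) < η u * ℓ * M / (2*ε) →
      suboptF C f (x (u+1)) ≤ η u ^ α * K := by
    intro u hcase
    have hg0 := hsub0 u
    have h1 : suboptF C f (x (u+1)) ≤ (1 - η u) * suboptF C f (x u) + M * η u ^ 2 / 2 := by
      have h2 : η u * suboptF C f (x u) ≤ η u * gapF C f (x u) :=
        mul_le_mul_of_nonneg_left (hgapsub u) (hη0 u).le
      have e : (1 - η u) * suboptF C f (x u)
          = suboptF C f (x u) - η u * suboptF C f (x u) := by ring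
      linarith [hdescent u, hD_strong u]
    have hgle : suboptF C f (x u)
        ≤ η u ^ (1/(1-r)) * ((ℓ:ℝ) * M / (2 * ε)) ^ (1 / (1 - r)) := by
      have h3 := Real.rpow_le_rpow (Real.rpow_nonneg hg0 _) hcase.le
        (by positivity : (0:ℝ) ≤ 1/(1-r))
      rw [← Real.rpow_mul hg0, mul_one_div, div_self (ne_of_gt hr1), Real.rpow_one] at h3
      have e : η u * ℓ * M / (2*ε) = η u * ((ℓ:ℝ) * M / (2 * ε)) := by ring
      rw [e, Real.mul_rpow (hη0 u).le (by positivity)] at h3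
      exact h3
    have hm1 : η u ^ (1/(1-r)) ≤ η u ^ α :=
      Real.rpow_le_rpow_of_exponent_ge (hη0 u) (hη1 u) hαr
    have hm2 : η u ^ (2:ℝ) ≤ η u ^ α :=
      Real.rpow_le_rpow_of_exponent_ge (hη0 u) (hη1 u) hα2
    have hsq : η u ^ (2:ℝ) = η u ^ 2 := by
      rw [show (2:ℝ) = ((2:ℕ):ℝ) by norm_num, Real.rpow_natCast]
    have h4 : (1 - η u) * suboptF C f (x u) ≤ suboptF C f (x u) :=
      mul_le_of_le_one_left hg0 (by linarith [hη0 u])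
    have h5 : suboptF C f (x u) ≤ η u ^ α * ((ℓ:ℝ) * M / (2 * ε)) ^ (1 / (1 - r)) :=
      hgle.trans (mul_le_mul_of_nonneg_right hm1 hQ0)
    have h6 : M * η u ^ 2 / 2 ≤ η u ^ α * (M/2) := by
      calc M * η u ^ 2 / 2 = η u ^ (2:ℝ) * (M/2) := by rw [hsq]; ring
        _ ≤ η u ^ α * (M/2) := mul_le_mul_of_nonneg_right hm2 (by linarith)
    calc suboptF C f (x (u+1)) ≤ (1 - η u) * suboptF C f (x u) + M * η u ^ 2 / 2 := h1
      _ ≤ η u ^ α * ((ℓ:ℝ) * M / (2 * ε)) ^ (1 / (1 - r)) + η u ^ α * (M/2) :=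
          add_le_add (h4.trans h5) h6
      _ = η u ^ α * K := by rw [hKdef]; ring
  -- helper quantities
  set A : ℕ → ℝ := fun u => suboptF C f (x S)
      * ∏ k ∈ Finset.Ico S u, (((k:ℝ)+ε)/((k:ℝ)+ℓ)) with hAdef
  set E : ℕ → ℝ := fun u =>
      Real.exp (ε * ℓ * (1/((S:ℝ)+ℓ-1) - 1/((u:ℝ)+ℓ-1))) with hEdef
  have hSR : (1:ℝ) ≤ (S:ℝ) := by exact_mod_cast hS1
  have hSl : (0:ℝ) < (S:ℝ)+ℓ-1 := by linarith
  have hBc : c * (1 - c) ≤ ε * ℓ := by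
    rcases le_or_gt 1 c with h | h
    · have h2 : c * (1-c) ≤ 0 := mul_nonpos_of_nonneg_of_nonpos hc0.le (by linarith)
      nlinarith
    · have h1 : c ≤ (ℓ:ℝ) := by rw [hcdef]; linarith
      have h2 : 1 - c ≤ ε := by rw [hcdef]; linarith
      nlinarith
  have hfactor : ∀ u : ℕ, 1 ≤ u →
      ((u:ℝ)+ε)/((u:ℝ)+ℓ) ≤ (((u:ℝ)+ℓ-1)/((u:ℝ)+ℓ)) ^ c
        * Real.exp (ε * ℓ * (1/((u:ℝ)+ℓ-1) - 1/((u:ℝ)+ℓ))) := by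
    intro u hu
    have hu1 : (1:ℝ) ≤ (u:ℝ) := by exact_mod_cast hu
    have ha : (2:ℝ) ≤ (u:ℝ)+ℓ := by linarith
    have h := aux_factor (a := (u:ℝ)+ℓ) ha hc0 hBc (by positivity)
    have e1 : ((u:ℝ)+ℓ - c)/((u:ℝ)+ℓ) = ((u:ℝ)+ε)/((u:ℝ)+ℓ) := by
      rw [hcdef]; ring_nf
    have h1 : ((u:ℝ)+ℓ-1) ≠ 0 := by
      have : (0:ℝ) < (u:ℝ)+ℓ-1 := by linarith
      exact ne_of_gt this
    have h2 : ((u:ℝ)+ℓ) ≠ 0 := by positivity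
    have e2 : (ε*ℓ) * (1/(((u:ℝ)+ℓ-1)*((u:ℝ)+ℓ)))
        = ε * ℓ * (1/((u:ℝ)+ℓ-1) - 1/((u:ℝ)+ℓ)) := by
      field_simp
      ring
    rw [e1, e2] at h
    exact h
  have hηcast : ∀ u : ℕ, 1 ≤ u → η (u-1) = (ℓ:ℝ)/((u:ℝ)+ℓ-1) := by
    intro u hu
    rw [hη (u-1)]
    have h1 : ((u-1:ℕ):ℝ) = (u:ℝ)-1 := by
      rw [Nat.cast_sub hu, Nat.cast_one]
    rw [h1]
    ring_nf
  -- the product estimate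
  have hprodle : ∀ u, S ≤ u → (∏ k ∈ Finset.Ico S u, (((k:ℝ)+ε)/((k:ℝ)+ℓ)))
      ≤ (((S:ℝ)+ℓ-1)/((u:ℝ)+ℓ-1)) ^ c * E u := by
    intro u hu
    induction u, hu using Nat.le_induction with
    | base =>
      rw [Finset.Ico_self, Finset.prod_empty]
      simp only [hEdef]
      rw [div_self (ne_of_gt hSl), Real.one_rpow, one_mul, sub_self, mul_zero,
        Real.exp_zero]
    | succ u hu ih =>
      have hu1 : 1 ≤ u := le_trans hS1 hu
      have hu1R : (1:ℝ) ≤ (u:ℝ) := by exact_mod_cast hu1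
      have hul1 : (0:ℝ) < (u:ℝ)+ℓ-1 := by linarith
      have hul : (0:ℝ) < (u:ℝ)+ℓ := by linarith
      rw [Finset.prod_Ico_succ_top hu]
      have hfac := hfactor u hu1
      have hrhs0 : (0:ℝ) ≤ (((S:ℝ)+ℓ-1)/((u:ℝ)+ℓ-1)) ^ c * E u :=
        mul_nonneg (Real.rpow_nonneg (by positivity) _)
          (by simp only [hEdef]; positivity)
      have step : (∏ k ∈ Finset.Ico S u, (((k:ℝ)+ε)/((k:ℝ)+ℓ))) * (((u:ℝ)+ε)/((u:ℝ)+ℓ))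
          ≤ ((((S:ℝ)+ℓ-1)/((u:ℝ)+ℓ-1)) ^ c * E u)
            * ((((u:ℝ)+ℓ-1)/((u:ℝ)+ℓ)) ^ c
              * Real.exp (ε * ℓ * (1/((u:ℝ)+ℓ-1) - 1/((u:ℝ)+ℓ)))) :=
        mul_le_mul ih hfac (by positivity) hrhs0
      refine step.trans (le_of_eq ?_)
      simp only [hEdef]
      have hPQ : (((S:ℝ)+ℓ-1)/((u:ℝ)+ℓ-1)) ^ c * (((u:ℝ)+ℓ-1)/((u:ℝ)+ℓ)) ^ c
          = (((S:ℝ)+ℓ-1)/((u:ℝ)+ℓ)) ^ c := by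
        rw [← Real.mul_rpow (by positivity) (by positivity)]
        congr 1
        field_simp
      calc ((((S:ℝ)+ℓ-1)/((u:ℝ)+ℓ-1)) ^ c
              * Real.exp (ε * ℓ * (1/((S:ℝ)+ℓ-1) - 1/((u:ℝ)+ℓ-1))))
            * ((((u:ℝ)+ℓ-1)/((u:ℝ)+ℓ)) ^ c
              * Real.exp (ε * ℓ * (1/((u:ℝ)+ℓ-1) - 1/((u:ℝ)+ℓ))))
          = ((((S:ℝ)+ℓ-1)/((u:ℝ)+ℓ-1)) ^ c * (((u:ℝ)+ℓ-1)/((u:ℝ)+ℓ)) ^ c)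
            * (Real.exp (ε * ℓ * (1/((S:ℝ)+ℓ-1) - 1/((u:ℝ)+ℓ-1)))
              * Real.exp (ε * ℓ * (1/((u:ℝ)+ℓ-1) - 1/((u:ℝ)+ℓ)))) := by ring
        _ = (((S:ℝ)+ℓ-1)/((u:ℝ)+ℓ)) ^ c
            * Real.exp (ε * ℓ * (1/((S:ℝ)+ℓ-1) - 1/(((u+1:ℕ):ℝ)+ℓ-1))) := by
            rw [hPQ, ← Real.exp_add]
            congr 1
            push_cast
            ring
        _ = (((S:ℝ)+ℓ-1)/(((u+1:ℕ):ℝ)+ℓ-1)) ^ c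
            * Real.exp (ε * ℓ * (1/((S:ℝ)+ℓ-1) - 1/(((u+1:ℕ):ℝ)+ℓ-1))) := by
            congr 2
            push_cast
            ring
  -- the main induction
  have key : ∀ u, S ≤ u → suboptF C f (x u) ≤ max (A u) (E u * (η (u-1) ^ α * K)) := by
    intro u hu
    induction u, hu using Nat.le_induction with
    | base =>
      refine le_trans (le_of_eq ?_) (le_max_left _ _)
      rw [hAdef]
      simp [Finset.Ico_self]
    | succ u hu ih =>
      have hu1 : 1 ≤ u := le_trans hS1 hu
      have hu1R : (1:ℝ) ≤ (u:ℝ) := by exact_mod_cast hu1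
      have hul1 : (0:ℝ) < (u:ℝ)+ℓ-1 := by linarith
      have hul : (0:ℝ) < (u:ℝ)+ℓ := by linarith
      have hηα0 : (0:ℝ) ≤ η u ^ α * K :=
        mul_nonneg (Real.rpow_nonneg (hη0 u).le _) hK0
      simp only [Nat.add_sub_cancel]
      rcases lt_or_ge (suboptF C f (x u) ^ (1-r)) (η u * ℓ * M / (2*ε)) with hcase | hcase
      · -- case B
        have h1 := hstepB u hcase
        have hE1 : 1 ≤ E (u+1) := by
          simp only [hEdef]
          apply Real.one_le_exp
          have hle : (S:ℝ)+ℓ-1 ≤ ((u+1:ℕ):ℝ)+ℓ-1 := by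
            push_cast
            have : (S:ℝ) ≤ (u:ℝ) := by exact_mod_cast hu
            linarith
          have h2 : 1/(((u+1:ℕ):ℝ)+ℓ-1) ≤ 1/((S:ℝ)+ℓ-1) :=
            one_div_le_one_div_of_le hSl hle
          apply mul_nonneg (by positivity)
          linarith
        refine h1.trans (le_trans ?_ (le_max_right _ _))
        exact le_mul_of_one_le_left hηα0 hE1
      · -- case A
        have h1 := hstepA u hcase
        have hρ0 : (0:ℝ) ≤ ((u:ℝ)+ε)/((u:ℝ)+ℓ) := by positivity
        refine h1.trans ?_
        refine (mul_le_mul_of_nonneg_left ih hρ0).trans ?_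
        rw [mul_max_of_nonneg _ _ hρ0]
        apply max_le_max
        · -- A part
          apply le_of_eq
          rw [hAdef]
          simp only
          rw [Finset.prod_Ico_succ_top hu]
          ring
        · -- G part
          have hηu1 : η (u-1) = (ℓ:ℝ)/((u:ℝ)+ℓ-1) := hηcast u hu1
          have hθ1 : ((u:ℝ)+ℓ-1)/((u:ℝ)+ℓ) ≤ 1 := by
            rw [div_le_one hul]; linarith
          have hθ0 : (0:ℝ) < ((u:ℝ)+ℓ-1)/((u:ℝ)+ℓ) := by positivity
          have hθα : (((u:ℝ)+ℓ-1)/((u:ℝ)+ℓ)) ^ c ≤ (((u:ℝ)+ℓ-1)/((u:ℝ)+ℓ)) ^ α :=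
            Real.rpow_le_rpow_of_exponent_ge hθ0 hθ1 hαc
          have hfac := (hfactor u hu1).trans
            (mul_le_mul_of_nonneg_right hθα (Real.exp_nonneg _))
          have hEuK0 : 0 ≤ E u * (η (u-1) ^ α * K) :=
            mul_nonneg (by simp only [hEdef]; positivity)
              (mul_nonneg (Real.rpow_nonneg (hη0 _).le _) hK0)
          have h2 : ((u:ℝ)+ε)/((u:ℝ)+ℓ) * (E u * (η (u-1) ^ α * K))
              ≤ ((((u:ℝ)+ℓ-1)/((u:ℝ)+ℓ)) ^ α
                  * Real.exp (ε * ℓ * (1/((u:ℝ)+ℓ-1) - 1/((u:ℝ)+ℓ))))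
                * (E u * (η (u-1) ^ α * K)) :=
            mul_le_mul_of_nonneg_right hfac hEuK0
          refine h2.trans (le_of_eq ?_)
          have hθη : (((u:ℝ)+ℓ-1)/((u:ℝ)+ℓ)) ^ α * η (u-1) ^ α = η u ^ α := by
            rw [← Real.mul_rpow hθ0.le (hη0 _).le]
            congr 1
            rw [hηu1, hη u]
            have h1' : ((u:ℝ)+ℓ-1) ≠ 0 := ne_of_gt hul1
            have h2' : ((u:ℝ)+ℓ) ≠ 0 := ne_of_gt hul
            field_simp
          have hEE : Real.exp (ε * ℓ * (1/((u:ℝ)+ℓ-1) - 1/((u:ℝ)+ℓ))) * E u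
              = E (u+1) := by
            simp only [hEdef]
            rw [← Real.exp_add]
            congr 1
            push_cast
            ring
          calc ((((u:ℝ)+ℓ-1)/((u:ℝ)+ℓ)) ^ α
                  * Real.exp (ε * ℓ * (1/((u:ℝ)+ℓ-1) - 1/((u:ℝ)+ℓ))))
                * (E u * (η (u-1) ^ α * K))
              = ((((u:ℝ)+ℓ-1)/((u:ℝ)+ℓ)) ^ α * η (u-1) ^ α)
                * (Real.exp (ε * ℓ * (1/((u:ℝ)+ℓ-1) - 1/((u:ℝ)+ℓ))) * E u) * K := by
                ring
            _ = η u ^ α * E (u+1) * K := by rw [hθη, hEE]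
            _ = E (u+1) * (η u ^ α * K) := by ring
  -- final assembly
  have hkey := key t ht
  have ht1 : 1 ≤ t := le_trans hS1 ht
  have htR : (1:ℝ) ≤ (t:ℝ) := by exact_mod_cast ht1
  have htl1 : (0:ℝ) < (t:ℝ)+ℓ-1 := by linarith
  have hS0 : (0:ℝ) < (S:ℝ) := by linarith
  have hEt : E t ≤ Real.exp (ε * ℓ / S) := by
    simp only [hEdef]
    apply Real.exp_le_exp.mpr
    have h1 : (0:ℝ) ≤ 1/((t:ℝ)+ℓ-1) := by positivity
    have h2 : 1/((S:ℝ)+ℓ-1) ≤ 1/(S:ℝ) :=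
      one_div_le_one_div_of_le hS0 (by linarith)
    calc ε * ℓ * (1/((S:ℝ)+ℓ-1) - 1/((t:ℝ)+ℓ-1)) ≤ ε * ℓ * (1/(S:ℝ)) := by
          apply mul_le_mul_of_nonneg_left (by linarith) (by positivity)
      _ = ε * ℓ / S := by ring
  have hratio : η (t-1) / η (S-1) = ((S:ℝ)+ℓ-1)/((t:ℝ)+ℓ-1) := by
    rw [hηcast t ht1, hηcast S hS1]
    have hl0 : (ℓ:ℝ) ≠ 0 := by positivity
    field_simp
  have hterm1 : A t ≤ Real.exp (ε * ℓ / S)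
      * (suboptF C f (x S) * (η (t-1) / η (S-1)) ^ c) := by
    rw [hAdef]
    simp only
    have h3 : (∏ k ∈ Finset.Ico S t, (((k:ℝ)+ε)/((k:ℝ)+ℓ)))
        ≤ (((S:ℝ)+ℓ-1)/((t:ℝ)+ℓ-1)) ^ c * Real.exp (ε * ℓ / S) :=
      (hprodle t ht).trans
        (mul_le_mul_of_nonneg_left hEt (Real.rpow_nonneg (by positivity) _))
    have h4 := mul_le_mul_of_nonneg_left h3 (hsub0 S)
    refine h4.trans (le_of_eq ?_)
    rw [hratio]
    ring
  have hterm2 : E t * (η (t-1) ^ α * K) ≤ Real.exp (ε * ℓ / S) * (η (t-1) ^ α * K) :=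
    mul_le_mul_of_nonneg_right hEt
      (mul_nonneg (Real.rpow_nonneg (hη0 _).le _) hK0)
  have hmax := hkey.trans (max_le_max hterm1 hterm2)
  rw [mul_max_of_nonneg _ _ (Real.exp_nonneg (ε * ℓ / S))]
  exact hmax
end
end

section
/- Let C ⊆ ℝ^n be a compact convex set, f : ℝ^n → ℝ convex and differentiable on an open set containing C, and suppose (C,f) satisfies both the strong (M,0)-growth property and the weak (M,r)-growth property for some M > 0 and r ∈ [0,1). Let ℓ ∈ ℕ with ℓ ≥ 1, η_t = ℓ/(t+ℓ), and ε ∈ (0,ℓ). Then for the iterates of the Frank–Wolfe algorithm with these step sizes, either there exists a strictly increasing sequence (t_i)_{i∈ℕ} of indices with subopt_{t_i} ≤ (η_{t_i}·ℓM/(2ε))^{1/(1−r)} for all i, or there exists R ∈ ℕ with R ≥ 1 such that for all t ≥ R+1: subopt_t ≤ subopt_R · (η_{t−1}/η_{R−1})^{ℓ−ε} · exp(εℓ/R). -/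
open Set Finset Real Pointwise

noncomputable section

variable {n : ℕ}

/-- Case `1 ≤ s`. -/
lemma fw_aux_ge_one {b s : ℝ} (hb : 2 ≤ b) (hs1 : 1 ≤ s) (hsb : s ≤ b - 1) :
    s * (Real.log b - Real.log (b - 1)) + (Real.log (b - s) - Real.log b) ≤ 0 := by
  set A : ℝ := Real.log b - Real.log (b - 1) with hA
  have hb1 : (0:ℝ) < b - 1 := by linarith
  have hbpos : (0:ℝ) < b := by linarith
  have hAle : A ≤ (b - 1)⁻¹ := by
    have h := Real.log_le_sub_one_of_pos (x := b / (b - 1)) (by positivity)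
    rw [Real.log_div (by positivity) (ne_of_gt hb1)] at h
    have : b / (b - 1) - 1 = (b - 1)⁻¹ := by field_simp; ring
    linarith [h, this ▸ h]
  have key : AntitoneOn (fun u : ℝ => u * A + Real.log (b - u)) (Icc 1 s) := by
    apply antitoneOn_of_deriv_nonpos (convex_Icc 1 s)
    · intro u hu
      have hbu : 0 < b - u := by
        have := hu.2; simp only [Set.mem_Icc] at hu; linarith [hu.2]
      exact (((hasDerivAt_mul_const A).add
        (((Real.hasDerivAt_log (ne_of_gt hbu)).comp u
          ((hasDerivAt_id u).const_sub b)))).continuousAt).continuousWithinAt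
    · intro u hu
      rw [interior_Icc] at hu
      have hbu : 0 < b - u := by have := hu.2; simp only [Set.mem_Ioo] at hu; linarith [hu.2]
      exact (((hasDerivAt_mul_const A).add
        (((Real.hasDerivAt_log (ne_of_gt hbu)).comp u
          ((hasDerivAt_id u).const_sub b)))).differentiableAt).differentiableWithinAt
    · intro u hu
      rw [interior_Icc] at hu
      obtain ⟨hu1, hus⟩ := hu
      have hbu : 0 < b - u := by linarith
      have hd : HasDerivAt (fun u : ℝ => u * A + Real.log (b - u)) (A + (b - u)⁻¹ * (-1)) u :=
        (hasDerivAt_mul_const A).add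
          ((Real.hasDerivAt_log (ne_of_gt hbu)).comp u ((hasDerivAt_id u).const_sub b))
      rw [hd.deriv]
      have h1 : (b - 1)⁻¹ ≤ (b - u)⁻¹ := by
        apply inv_anti₀ hbu (by linarith)
      linarith
  have h01 : (1:ℝ) ∈ Icc (1:ℝ) s := ⟨le_refl 1, hs1⟩
  have h0s : s ∈ Icc (1:ℝ) s := ⟨hs1, le_refl s⟩
  have := key h01 h0s hs1
  simp only at this
  -- this : s * A + log (b - s) ≤ 1 * A + log (b - 1)
  have hlogb : 1 * A + Real.log (b - 1) = Real.log b := by rw [one_mul, hA]; ring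
  linarith [this, hlogb ▸ this]


/-- Case `0 ≤ s ≤ 1`. -/
lemma fw_aux_le_one {b s : ℝ} (hb : 2 ≤ b) (hs0 : 0 ≤ s) (hs1 : s ≤ 1) :
    s * (Real.log b - Real.log (b - 1)) + (Real.log (b - s) - Real.log b) ≤
      s * (1 - s) / (2 * (b - 1) ^ 2) := by
  set A : ℝ := Real.log b - Real.log (b - 1) with hA
  set c : ℝ := (2 * (b - 1) ^ 2)⁻¹ with hc
  have hb1 : (0:ℝ) < b - 1 := by linarith
  have hcpos : 0 < c := by rw [hc]; positivity
  set φ : ℝ → ℝ := fun u => u * A + Real.log (b - u) - Real.log b - (u - u ^ 2) * c with hφ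
  have hder : ∀ u : ℝ, u < b →
      HasDerivAt φ (A + (b - u)⁻¹ * (-1) - (1 - 2 * u) * c) u := by
    intro u hu
    have hbu : 0 < b - u := by linarith
    have h1 : HasDerivAt (fun u : ℝ => u * A + Real.log (b - u)) (A + (b - u)⁻¹ * (-1)) u :=
      (hasDerivAt_mul_const A).add
        ((Real.hasDerivAt_log (ne_of_gt hbu)).comp u ((hasDerivAt_id u).const_sub b))
    have h2 : HasDerivAt (fun u : ℝ => (u - u ^ 2) * c) ((1 - 2 * u) * c) u := by
      have : HasDerivAt (fun u : ℝ => u - u ^ 2) (1 - 2 * u) u := by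
        exact ((hasDerivAt_id u).sub (hasDerivAt_pow 2 u)).congr_deriv (by norm_num)
      exact this.mul_const c
    exact (h1.sub_const (Real.log b)).sub h2
  have hF : ∀ u : ℝ, u < b → HasDerivAt (fun u : ℝ => A + (b - u)⁻¹ * (-1) - (1 - 2 * u) * c)
      (2 * c - (b - u)⁻¹ ^ 2) u := by
    intro u hub
    have hbu : b - u ≠ 0 := by intro h; linarith
    have h3 : HasDerivAt (fun u : ℝ => (b - u)⁻¹) (-((b - u)⁻¹ ^ 2) * (-1)) u := by
      exact ((hasDerivAt_inv hbu).comp u ((hasDerivAt_id u).const_sub b)).congr_deriv (by rw [inv_pow])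
    have h4 : HasDerivAt (fun u : ℝ => (1 - 2 * u) * c) ((-2) * c) u := by
      have : HasDerivAt (fun u : ℝ => 1 - 2 * u) (-2) u := by
        simpa using ((hasDerivAt_id u).const_mul (2:ℝ)).const_sub (1:ℝ)
      exact this.mul_const c
    have := ((h3.mul_const (-1)).const_add A).sub h4
    exact this.congr_deriv (by ring)
  have hconv : ConvexOn ℝ (Icc (0:ℝ) 1) φ := by
    apply convexOn_of_deriv2_nonneg (convex_Icc 0 1)
    · intro u hu
      have : u < b := by simp only [Set.mem_Icc] at hu; linarith [hu.2]
      exact (hder u this).continuousAt.continuousWithinAt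
    · intro u hu
      rw [interior_Icc] at hu
      exact (hder u (by linarith [hu.2])).differentiableAt.differentiableWithinAt
    · intro u hu
      rw [interior_Icc] at hu
      have hub : u < b := by linarith [hu.2]
      have heq : Set.EqOn (deriv φ) (fun u => A + (b - u)⁻¹ * (-1) - (1 - 2 * u) * c)
          (Ioo (0:ℝ) 1) := fun z hz => (hder z (by linarith [hz.2])).deriv
      have hev : deriv φ =ᶠ[nhds u] (fun u => A + (b - u)⁻¹ * (-1) - (1 - 2 * u) * c) :=
        Filter.eventuallyEq_of_mem (isOpen_Ioo.mem_nhds hu) heq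
      exact (((hF u hub).differentiableAt).congr_of_eventuallyEq hev).differentiableWithinAt
    · intro u hu
      rw [interior_Icc] at hu
      have hub : u < b := by linarith [hu.2]
      have heq : Set.EqOn (deriv φ) (fun u => A + (b - u)⁻¹ * (-1) - (1 - 2 * u) * c)
          (Ioo (0:ℝ) 1) := fun z hz => (hder z (by linarith [hz.2])).deriv
      have hev : deriv φ =ᶠ[nhds u] (fun u => A + (b - u)⁻¹ * (-1) - (1 - 2 * u) * c) :=
        Filter.eventuallyEq_of_mem (isOpen_Ioo.mem_nhds hu) heq
      have : deriv^[2] φ u = 2 * c - (b - u)⁻¹ ^ 2 := by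
        rw [Function.iterate_succ, Function.iterate_one, Function.comp_apply]
        rw [hev.deriv_eq]
        exact (hF u hub).deriv
      rw [this]
      have h5 : (b - u)⁻¹ ≤ (b - 1)⁻¹ := by
        have hu1 : b - 1 ≤ b - u := by linarith [hu.2]
        exact inv_anti₀ hb1 hu1
      have h6 : (b - u)⁻¹ ^ 2 ≤ (b - 1)⁻¹ ^ 2 := by
        have hbu2 : (0:ℝ) < b - u := by linarith [hu.2]
        have : 0 < (b - u)⁻¹ := inv_pos.2 hbu2
        nlinarith
      have h7 : 2 * c = (b - 1)⁻¹ ^ 2 := by rw [hc]; field_simp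
      linarith
  have h0 : (0:ℝ) ∈ Icc (0:ℝ) 1 := ⟨le_refl 0, zero_le_one⟩
  have h1 : (1:ℝ) ∈ Icc (0:ℝ) 1 := ⟨zero_le_one, le_refl 1⟩
  have hkey := hconv.2 h0 h1 (by linarith : (0:ℝ) ≤ 1 - s) hs0 (by ring)
  have hpt : (1 - s) • (0:ℝ) + s • (1:ℝ) = s := by simp
  rw [hpt] at hkey
  have hφ0 : φ 0 = 0 := by
    show (0:ℝ) * A + Real.log (b - 0) - Real.log b - ((0:ℝ) - 0 ^ 2) * c = 0
    simp
  have hφ1 : φ 1 = 0 := by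
    show (1:ℝ) * A + Real.log (b - 1) - Real.log b - ((1:ℝ) - 1 ^ 2) * c = 0
    rw [hA]; ring
  rw [hφ0, hφ1] at hkey
  simp only [smul_eq_mul, mul_zero, add_zero] at hkey
  -- hkey : φ s ≤ 0
  have : φ s = s * A + (Real.log (b - s) - Real.log b) - (s - s ^ 2) * c := by rw [hφ]; ring
  have hfin : s * A + (Real.log (b - s) - Real.log b) ≤ (s - s ^ 2) * c := by linarith [this ▸ hkey]
  calc s * A + (Real.log (b - s) - Real.log b) ≤ (s - s ^ 2) * c := hfin
    _ = s * (1 - s) / (2 * (b - 1) ^ 2) := by rw [hc]; field_simp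


lemma fw_sum_inv_sq {R t : ℕ} (hR : 1 ≤ R) :
    ∑ k ∈ Finset.Ico R t, ((k : ℝ) ^ 2)⁻¹ ≤ 2 / R := by
  have hR1 : (1:ℝ) ≤ (R:ℝ) := by exact_mod_cast hR
  set a : ℕ → ℝ := fun k => ((k : ℝ) - 1/2)⁻¹ with ha
  have hapos : ∀ k : ℕ, 1 ≤ k → 0 < a k := by
    intro k hk
    have : (1:ℝ) ≤ (k:ℝ) := by exact_mod_cast hk
    apply inv_pos.2; linarith
  have tele : ∀ t : ℕ, R ≤ t → ∑ k ∈ Finset.Ico R t, (a k - a (k+1)) = a R - a t := by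
    intro t ht
    induction t, ht using Nat.le_induction with
    | base => simp
    | succ t ht ih => rw [Finset.sum_Ico_succ_top ht, ih]; ring
  have step : ∀ k ∈ Finset.Ico R t, ((k : ℝ) ^ 2)⁻¹ ≤ a k - a (k+1) := by
    intro k hk
    have hk1 : 1 ≤ k := le_trans hR (Finset.mem_Ico.1 hk).1
    have hkr : (1:ℝ) ≤ (k:ℝ) := by exact_mod_cast hk1
    have h1 : (0:ℝ) < (k:ℝ) - 1/2 := by linarith
    have h2 : (0:ℝ) < (k:ℝ) + 1/2 := by linarith
    have heq : a k - a (k+1) = ((k:ℝ)^2 - 1/4)⁻¹ := by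
      rw [ha]
      push_cast
      rw [inv_sub_inv (by linarith) (by linarith)]
      have h3 : (0:ℝ) < (k:ℝ)^2 - 1/4 := by nlinarith
      rw [show ((k:ℝ) + 1 - 1/2) - ((k:ℝ) - 1/2) = 1 by ring]
      rw [show ((k:ℝ) - 1/2) * ((k:ℝ) + 1 - 1/2) = (k:ℝ)^2 - 1/4 by ring]
      rw [one_div]
    rw [heq]
    exact inv_anti₀ (by nlinarith) (by nlinarith)
  rcases le_or_gt t R with h | h
  · rw [Finset.Ico_eq_empty (by omega)]
    simp
    positivity
  · calc ∑ k ∈ Finset.Ico R t, ((k : ℝ) ^ 2)⁻¹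
        ≤ ∑ k ∈ Finset.Ico R t, (a k - a (k+1)) := Finset.sum_le_sum step
      _ = a R - a t := tele t h.le
      _ ≤ a R := by
          have := hapos t (le_trans hR h.le)
          linarith
      _ ≤ 2 / R := by
          rw [ha]
          have h3 : (0:ℝ) < (R:ℝ)/2 := by linarith
          have h4 : (R:ℝ)/2 ≤ (R:ℝ) - 1/2 := by linarith
          calc ((R:ℝ) - 1/2)⁻¹ ≤ ((R:ℝ)/2)⁻¹ := inv_anti₀ h3 h4
            _ = 2 / R := by rw [inv_div]

/-- The per-step log inequality, uniform in `s`. -/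
lemma fw_log_step (ℓ : ℕ) (hℓ : 1 ≤ ℓ) (ε : ℝ) (hε0 : 0 < ε) (hεℓ : ε < ℓ) (k : ℕ) (hk : 1 ≤ k) :
    Real.log ((k : ℝ) + ε) - Real.log ((k : ℝ) + ℓ) ≤
      ((ℓ : ℝ) - ε) * (Real.log ((k : ℝ) + ℓ - 1) - Real.log ((k : ℝ) + ℓ)) +
        (if (1:ℝ) ≤ (ℓ : ℝ) - ε then 0 else ε * ℓ / 2 * ((k : ℝ) ^ 2)⁻¹) := by
  have hk1 : (1:ℝ) ≤ (k:ℝ) := by exact_mod_cast hk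
  have hl1 : (1:ℝ) ≤ (ℓ:ℝ) := by exact_mod_cast hℓ
  set b : ℝ := (k : ℝ) + ℓ with hbdef
  set s : ℝ := (ℓ : ℝ) - ε with hsdef
  have hb2 : (2:ℝ) ≤ b := by rw [hbdef]; linarith
  have hbs : b - s = (k : ℝ) + ε := by rw [hbdef, hsdef]; ring
  have hs0 : 0 < s := by rw [hsdef]; linarith
  have key : s * (Real.log b - Real.log (b - 1)) + (Real.log (b - s) - Real.log b) ≤
      (if (1:ℝ) ≤ s then 0 else ε * ℓ / 2 * ((k : ℝ) ^ 2)⁻¹) := by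
    split_ifs with h1
    · exact fw_aux_ge_one hb2 h1 (by rw [hbdef, hsdef]; linarith)
    · push_neg at h1
      have := fw_aux_le_one hb2 hs0.le h1.le
      refine le_trans this ?_
      have h1s : 1 - s ≤ ε := by rw [hsdef]; linarith
      have hsl : s ≤ (ℓ:ℝ) := by rw [hsdef]; linarith
      have hb1k : (k:ℝ) ≤ b - 1 := by rw [hbdef]; linarith
      have hkpos : (0:ℝ) < (k:ℝ) := by linarith
      have hnum : s * (1 - s) ≤ ε * ℓ := by nlinarith [hs0.le, sub_nonneg.2 h1.le]
      have hden : (k:ℝ)^2 ≤ (b-1)^2 := by nlinarith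
      have hd1 : (0:ℝ) < (k:ℝ)^2 := by positivity
      calc s * (1 - s) / (2 * (b - 1) ^ 2) ≤ ε * ℓ / (2 * (k:ℝ)^2) :=
            div_le_div₀ (by positivity) hnum (by positivity) (by nlinarith)
        _ = ε * ℓ / 2 * ((k : ℝ) ^ 2)⁻¹ := by field_simp
  rw [hbs] at key
  linarith [key]

lemma fw_prod_bound (ℓ : ℕ) (hℓ : 1 ≤ ℓ) {ε : ℝ} (hε0 : 0 < ε) (hεℓ : ε < ℓ)
    {R t : ℕ} (hR : 1 ≤ R) (hRt : R ≤ t) :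
    ∏ k ∈ Finset.Ico R t, (((k:ℝ) + ε) / ((k:ℝ) + ℓ)) ≤
      (((R:ℝ) + ℓ - 1) / ((t:ℝ) + ℓ - 1)) ^ ((ℓ:ℝ) - ε) * Real.exp (ε * ℓ / R) := by
  have hl1 : (1:ℝ) ≤ (ℓ:ℝ) := by exact_mod_cast hℓ
  have hR1 : (1:ℝ) ≤ (R:ℝ) := by exact_mod_cast hR
  have ht1 : (1:ℝ) ≤ (t:ℝ) := le_trans hR1 (by exact_mod_cast hRt)
  set s : ℝ := (ℓ:ℝ) - ε with hsdef
  have hkpos : ∀ k ∈ Finset.Ico R t, (0:ℝ) < ((k:ℝ) + ε) / ((k:ℝ) + ℓ) := by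
    intro k hk
    have : (0:ℝ) ≤ (k:ℝ) := Nat.cast_nonneg k
    positivity
  have h1 : ∏ k ∈ Finset.Ico R t, (((k:ℝ) + ε) / ((k:ℝ) + ℓ)) =
      Real.exp (∑ k ∈ Finset.Ico R t, Real.log (((k:ℝ) + ε) / ((k:ℝ) + ℓ))) := by
    rw [Real.exp_sum]
    exact Finset.prod_congr rfl (fun k hk => (Real.exp_log (hkpos k hk)).symm)
  -- telescoping sum of logs
  set L : ℕ → ℝ := fun k => Real.log ((k:ℝ) + ℓ - 1) with hL
  have tele : ∀ u : ℕ, R ≤ u →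
      ∑ k ∈ Finset.Ico R u, (Real.log ((k:ℝ) + ℓ - 1) - Real.log ((k:ℝ) + ℓ)) =
        L R - L u := by
    intro u hu
    induction u, hu using Nat.le_induction with
    | base => simp
    | succ u hu ih =>
      rw [Finset.sum_Ico_succ_top hu, ih]
      simp only [hL]
      have : ((u+1:ℕ):ℝ) + (ℓ:ℝ) - 1 = (u:ℝ) + (ℓ:ℝ) := by push_cast; ring
      rw [this]
      ring
  have hcases : ∑ k ∈ Finset.Ico R t,
      (if (1:ℝ) ≤ s then (0:ℝ) else ε * ℓ / 2 * ((k : ℝ) ^ 2)⁻¹) ≤ ε * ℓ / R := by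
    by_cases h1s : (1:ℝ) ≤ s
    · simp only [if_pos h1s, Finset.sum_const_zero]
      positivity
    · simp only [if_neg h1s]
      rw [← Finset.mul_sum]
      calc ε * ℓ / 2 * ∑ k ∈ Finset.Ico R t, ((k : ℝ) ^ 2)⁻¹
          ≤ ε * ℓ / 2 * (2 / R) := by
            apply mul_le_mul_of_nonneg_left (fw_sum_inv_sq hR) (by positivity)
        _ = ε * ℓ / R := by field_simp
  have hsum : ∑ k ∈ Finset.Ico R t, Real.log (((k:ℝ) + ε) / ((k:ℝ) + ℓ)) ≤
      s * (L R - L t) + ε * ℓ / R := by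
    have hstep : ∀ k ∈ Finset.Ico R t, Real.log (((k:ℝ) + ε) / ((k:ℝ) + ℓ)) ≤
        s * (Real.log ((k:ℝ) + ℓ - 1) - Real.log ((k:ℝ) + ℓ)) +
          (if (1:ℝ) ≤ s then (0:ℝ) else ε * ℓ / 2 * ((k : ℝ) ^ 2)⁻¹) := by
      intro k hk
      have hkR : 1 ≤ k := le_trans hR (Finset.mem_Ico.1 hk).1
      have hk1 : (1:ℝ) ≤ (k:ℝ) := by exact_mod_cast hkR
      have hlog : Real.log (((k:ℝ) + ε) / ((k:ℝ) + ℓ)) =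
          Real.log ((k:ℝ) + ε) - Real.log ((k:ℝ) + ℓ) :=
        Real.log_div (by positivity) (by positivity)
      rw [hlog]
      exact fw_log_step ℓ hℓ ε hε0 hεℓ k hkR
    calc ∑ k ∈ Finset.Ico R t, Real.log (((k:ℝ) + ε) / ((k:ℝ) + ℓ))
        ≤ ∑ k ∈ Finset.Ico R t,
            (s * (Real.log ((k:ℝ) + ℓ - 1) - Real.log ((k:ℝ) + ℓ)) +
              (if (1:ℝ) ≤ s then (0:ℝ) else ε * ℓ / 2 * ((k : ℝ) ^ 2)⁻¹)) :=
          Finset.sum_le_sum hstep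
      _ = s * (L R - L t) + ∑ k ∈ Finset.Ico R t,
            (if (1:ℝ) ≤ s then (0:ℝ) else ε * ℓ / 2 * ((k : ℝ) ^ 2)⁻¹) := by
          rw [Finset.sum_add_distrib, ← Finset.mul_sum, tele t hRt]
      _ ≤ s * (L R - L t) + ε * ℓ / R := by linarith [hcases]
  have hbasepos : (0:ℝ) < ((R:ℝ) + ℓ - 1) / ((t:ℝ) + ℓ - 1) := by
    apply div_pos <;> linarith
  have hrpow : (((R:ℝ) + ℓ - 1) / ((t:ℝ) + ℓ - 1)) ^ ((ℓ:ℝ) - ε) =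
      Real.exp (s * (L R - L t)) := by
    rw [Real.rpow_def_of_pos hbasepos, hL,
      Real.log_div (by linarith) (by linarith)]
    rw [hsdef]
    ring_nf
  rw [h1, hrpow, ← Real.exp_add]
  exact Real.exp_le_exp.2 hsum


lemma fw_grad_le {C : Set (Eucl n)} {f : Eucl n → ℝ} (hfconv : ConvexOn ℝ C f)
    {U : Set (Eucl n)} (hUopen : IsOpen U) (hCU : C ⊆ U) (hfdiff : DifferentiableOn ℝ f U)
    {x y : Eucl n} (hx : x ∈ C) (hy : y ∈ C) :
    (inner ℝ (gradient f x) (y - x) : ℝ) ≤ f y - f x := by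
  have hdx : DifferentiableAt ℝ f x :=
    (hfdiff x (hCU hx)).differentiableAt (hUopen.mem_nhds (hCU hx))
  have hF : HasFDerivAt f (InnerProductSpace.toDual ℝ (Eucl n) (gradient f x)) x :=
    hdx.hasGradientAt.hasFDerivAt
  have hline : HasDerivAt (fun θ : ℝ => x + θ • (y - x)) (y - x) 0 := by
    simpa using ((hasDerivAt_id (0:ℝ)).smul_const (y - x)).const_add x
  have h0 : x + (0:ℝ) • (y - x) = x := by simp
  have hg : HasDerivAt (fun θ : ℝ => f (x + θ • (y - x)))
      ((inner ℝ (gradient f x) (y - x) : ℝ)) 0 := by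
    have hF' : HasFDerivAt f (InnerProductSpace.toDual ℝ (Eucl n) (gradient f x))
        (x + (0:ℝ) • (y - x)) := by rw [h0]; exact hF
    have := hF'.comp_hasDerivAt (0:ℝ) hline
    exact this.congr_deriv (by rw [InnerProductSpace.toDual_apply_apply])
  set g : ℝ → ℝ := fun θ => f (x + θ • (y - x)) with hgdef
  have hgw : HasDerivWithinAt g ((inner ℝ (gradient f x) (y - x) : ℝ)) (Ioi (0:ℝ)) 0 :=
    hg.hasDerivWithinAt
  have htend := (hasDerivWithinAt_iff_tendsto_slope' (notMem_Ioi.2 le_rfl)).1 hgw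
  apply le_of_tendsto htend
  filter_upwards [Ioc_mem_nhdsGT_of_mem (Set.mem_Ico.2 ⟨le_refl (0:ℝ), zero_lt_one⟩)] with θ hθ
  obtain ⟨hθ0, hθ1⟩ := hθ
  have hcomb := hfconv.2 hx hy (by linarith : (0:ℝ) ≤ 1 - θ) hθ0.le (by ring)
  have heq : (1 - θ) • x + θ • y = x + θ • (y - x) := by
    rw [smul_sub, sub_smul, one_smul]; abel
  rw [heq] at hcomb
  rw [slope_def_field]
  have hg0 : g 0 = f x := by rw [hgdef]; simp
  rw [hg0]
  rw [div_le_iff₀ (by simpa using hθ0)]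
  have : g θ ≤ (1 - θ) * f x + θ * f y := by simpa [hgdef, smul_eq_mul] using hcomb
  ring_nf
  nlinarith [this]

lemma fw_gap_eq {C : Set (Eucl n)} {f : Eucl n → ℝ} {x v : Eucl n}
    (hv : IsFWVertex C f x v) : gapF C f x = (inner ℝ (gradient f x) (x - v) : ℝ) := by
  apply IsGreatest.csSup_eq
  constructor
  · exact ⟨v, hv.1, rfl⟩
  · rintro z ⟨y, hy, rfl⟩
    simp only [inner_sub_right]
    have := hv.2 y hy
    linarith

lemma fw_subopt_nonneg {C : Set (Eucl n)} {f : Eucl n → ℝ} (hCcomp : IsCompact C)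
    {U : Set (Eucl n)} (hCU : C ⊆ U) (hfdiff : DifferentiableOn ℝ f U)
    {z : Eucl n} (hz : z ∈ C) : 0 ≤ suboptF C f z := by
  have hcont : ContinuousOn f C := (hfdiff.continuousOn).mono hCU
  have hbdd : BddBelow (f '' C) := (hCcomp.image_of_continuousOn hcont).bddBelow
  have := csInf_le hbdd ⟨z, hz, rfl⟩
  simp only [suboptF]
  linarith

lemma fw_gap_ge_subopt {C : Set (Eucl n)} {f : Eucl n → ℝ} (hCcomp : IsCompact C)
    (hCne : C.Nonempty) (hfconv : ConvexOn ℝ C f)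
    {U : Set (Eucl n)} (hUopen : IsOpen U) (hCU : C ⊆ U) (hfdiff : DifferentiableOn ℝ f U)
    {z : Eucl n} (hz : z ∈ C) : suboptF C f z ≤ gapF C f z := by
  have hbddA : BddAbove ((fun y => (inner ℝ (gradient f z) (z - y) : ℝ)) '' C) := by
    apply hCcomp.bddAbove_image
    apply Continuous.continuousOn
    exact continuous_const.inner (continuous_const.sub continuous_id)
  have hkey : ∀ y ∈ C, f z - f y ≤ gapF C f z := by
    intro y hy
    have h1 := fw_grad_le hfconv hUopen hCU hfdiff hz hy
    have h2 : (inner ℝ (gradient f z) (z - y) : ℝ) ≤ gapF C f z :=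
      le_csSup hbddA ⟨y, hy, rfl⟩
    have h3 : (inner ℝ (gradient f z) (z - y) : ℝ) = -(inner ℝ (gradient f z) (y - z) : ℝ) := by
      rw [← inner_neg_right, neg_sub]
    linarith
  have : f z - gapF C f z ≤ sInf (f '' C) := by
    apply le_csInf (hCne.image f)
    rintro b ⟨y, hy, rfl⟩
    linarith [hkey y hy]
  simp only [suboptF]
  linarith

/-- **Theorem (weak `(M,r)`-growth, dichotomy).** Either a strictly increasing subsequence of
iterations realizes the fast bound, or from some iteration `R ≥ 1` onwards the
`O(t^{-(ℓ-ε)})` bound relative to iteration `R` holds. -/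
theorem fw_weak_growth_dichotomy
    (n : ℕ) (C : Set (Eucl n)) (f : Eucl n → ℝ)
    (hCcomp : IsCompact C) (hCconv : Convex ℝ C) (hCne : C.Nonempty)
    (hfconv : ConvexOn ℝ C f)
    (U : Set (Eucl n)) (hUopen : IsOpen U) (hCU : C ⊆ U)
    (hfdiff : DifferentiableOn ℝ f U)
    (M r : ℝ) (hM : 0 < M) (hr : r ∈ Ico (0 : ℝ) 1)
    (hstrong : StrongGrowth C f M 0) (hweak : WeakGrowth C f M r)
    (ℓ : ℕ) (hℓ : 1 ≤ ℓ)
    (η : ℕ → ℝ) (hη : ∀ t : ℕ, η t = (ℓ : ℝ) / ((t : ℝ) + ℓ))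
    (x v : ℕ → Eucl n)
    (hx0 : x 0 ∈ C)
    (hv : ∀ t : ℕ, IsFWVertex C f (x t) (v t))
    (hstep : ∀ t : ℕ, x (t + 1) = x t + η t • (v t - x t))
    (ε : ℝ) (hε : ε ∈ Ioo (0 : ℝ) (ℓ : ℝ)) :
    (∃ ts : ℕ → ℕ, StrictMono ts ∧
        ∀ i : ℕ, suboptF C f (x (ts i)) ≤
          (η (ts i) * ℓ * M / (2 * ε)) ^ (1 / (1 - r))) ∨
      (∃ R : ℕ, 1 ≤ R ∧ ∀ t : ℕ, R + 1 ≤ t →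
        suboptF C f (x t) ≤
          suboptF C f (x R) * (η (t - 1) / η (R - 1)) ^ ((ℓ : ℝ) - ε) *
            Real.exp (ε * ℓ / R)) := by
  obtain ⟨hε0, hεl⟩ := hε
  obtain ⟨hr0, hr1⟩ := hr
  have h1r : 0 < 1 - r := by linarith
  have hl1 : (1:ℝ) ≤ (ℓ:ℝ) := by exact_mod_cast hℓ
  have hη01 : ∀ t : ℕ, η t ∈ Icc (0:ℝ) 1 := by
    intro t
    rw [hη t]
    have htn : (0:ℝ) ≤ (t:ℝ) := Nat.cast_nonneg t
    constructor
    · positivity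
    · rw [div_le_one (by positivity)]; linarith
  have hηpos : ∀ t : ℕ, 0 < η t := by
    intro t
    rw [hη t]
    have htn : (0:ℝ) ≤ (t:ℝ) := Nat.cast_nonneg t
    positivity
  have hmem : ∀ t, x t ∈ C := by
    intro t
    induction t with
    | zero => exact hx0
    | succ t ih =>
      rw [hstep t]
      have heq : x t + η t • (v t - x t) = (1 - η t) • x t + η t • (v t) := by
        rw [smul_sub, sub_smul, one_smul]; abel
      rw [heq]
      exact hCconv ih (hv t).1 (by linarith [(hη01 t).2]) (hη01 t).1 (by ring)
  set P : ℕ → Prop := fun t => suboptF C f (x t) ≤ (η t * ℓ * M / (2 * ε)) ^ (1 / (1 - r))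
    with hP
  by_cases hinf : (setOf P).Infinite
  · left
    refine ⟨Nat.nth P, Nat.nth_strictMono hinf, fun i => ?_⟩
    have := Nat.nth_mem_of_infinite hinf i
    simpa [hP] using this
  · right
    rw [Set.not_infinite] at hinf
    obtain ⟨N, hN⟩ := hinf.bddAbove
    refine ⟨N + 1, Nat.le_add_left 1 N, ?_⟩
    have hfail : ∀ t, N + 1 ≤ t → ¬ P t := by
      intro t ht hPt
      have : t ≤ N := hN hPt
      omega
    have key : ∀ t : ℕ, ¬ P t →
        suboptF C f (x (t+1)) ≤ (((t:ℝ)+ε)/((t:ℝ)+ℓ)) * suboptF C f (x t) := by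
      intro t hPt
      have hxC := hmem t
      have hSnn : 0 ≤ suboptF C f (x t) := fw_subopt_nonneg hCcomp hCU hfdiff hxC
      have hGS : suboptF C f (x t) ≤ gapF C f (x t) :=
        fw_gap_ge_subopt hCcomp hCne hfconv hUopen hCU hfdiff hxC
      have hGnn : 0 ≤ gapF C f (x t) := le_trans hSnn hGS
      have hηt := hηpos t
      have hB : 0 < η t * ℓ * M / (2*ε) := by positivity
      simp only [hP] at hPt
      push_neg at hPt
      have hQpos : 0 < (η t * (ℓ:ℝ) * M / (2*ε)) ^ (1/(1-r)) := Real.rpow_pos_of_pos hB _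
      have hSpos : 0 < suboptF C f (x t) := lt_trans hQpos hPt
      have hSp : η t * ℓ * M / (2*ε) < suboptF C f (x t) ^ (1-r) := by
        have h := Real.rpow_lt_rpow (le_of_lt hQpos) hPt h1r
        rwa [← Real.rpow_mul (le_of_lt hB), one_div_mul_cancel (ne_of_gt h1r),
          Real.rpow_one] at h
      have hSppos : 0 < suboptF C f (x t) ^ (1-r) := Real.rpow_pos_of_pos hSpos _
      have hwk := hweak (x t) hxC (v t) (hv t) (η t) (hη01 t)
      rw [← hstep t] at hwk
      have hDle : bregmanD f (x (t+1)) (x t) ≤ ε * η t * gapF C f (x t) / ℓ := by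
        have h1 : bregmanD f (x (t+1)) (x t) ≤
            M * η t ^ 2 / 2 * gapF C f (x t) / suboptF C f (x t) ^ (1-r) :=
          (le_div_iff₀ hSppos).2 hwk
        have h2 : M * η t ^ 2 / 2 * gapF C f (x t) / suboptF C f (x t) ^ (1-r) ≤
            M * η t ^ 2 / 2 * gapF C f (x t) / (η t * ℓ * M / (2*ε)) :=
          div_le_div_of_nonneg_left (mul_nonneg (by positivity) hGnn) hB (le_of_lt hSp)
        have h3 : M * η t ^ 2 / 2 * gapF C f (x t) / (η t * ℓ * M / (2*ε)) =
            ε * η t * gapF C f (x t) / ℓ := by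
          have hη0 : η t ≠ 0 := ne_of_gt hηt
          have hl0 : (ℓ:ℝ) ≠ 0 := by positivity
          have hM0 : M ≠ 0 := ne_of_gt hM
          have hε0' : ε ≠ 0 := ne_of_gt hε0
          field_simp
        rw [h3] at h2
        linarith
      have hgap_eq := fw_gap_eq (hv t)
      have hinner : (inner ℝ (gradient f (x t)) (x (t+1) - x t) : ℝ) = -(η t * gapF C f (x t)) := by
        rw [hstep t, add_sub_cancel_left, real_inner_smul_right, hgap_eq,
          ← neg_sub (x t) (v t), inner_neg_right]
        ring
      have hexp : suboptF C f (x (t+1)) =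
          suboptF C f (x t) - η t * gapF C f (x t) + bregmanD f (x (t+1)) (x t) := by
        simp only [suboptF, bregmanD, hinner]
        ring
      have hcoef : 0 ≤ η t * (1 - ε/ℓ) := by
        have : ε / ℓ ≤ 1 := by rw [div_le_one (by linarith)]; linarith
        nlinarith
      have hfrac : 1 - η t * (1 - ε/(ℓ:ℝ)) = ((t:ℝ)+ε)/((t:ℝ)+ℓ) := by
        rw [hη t]
        have htn : (0:ℝ) ≤ (t:ℝ) := Nat.cast_nonneg t
        have h1 : (t:ℝ) + ℓ ≠ 0 := by positivity
        have h2 : (ℓ:ℝ) ≠ 0 := by positivity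
        field_simp
        ring
      calc suboptF C f (x (t+1))
          = suboptF C f (x t) - η t * gapF C f (x t) + bregmanD f (x (t+1)) (x t) := hexp
        _ ≤ suboptF C f (x t) - η t * gapF C f (x t) + ε * η t * gapF C f (x t) / ℓ := by
            linarith
        _ = suboptF C f (x t) - (η t * (1 - ε/ℓ)) * gapF C f (x t) := by
            have hl0 : (ℓ:ℝ) ≠ 0 := by positivity
            field_simp
            ring
        _ ≤ suboptF C f (x t) - (η t * (1 - ε/ℓ)) * suboptF C f (x t) := by
            linarith [mul_le_mul_of_nonneg_left hGS hcoef]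
        _ = (1 - η t * (1 - ε/(ℓ:ℝ))) * suboptF C f (x t) := by ring
        _ = (((t:ℝ)+ε)/((t:ℝ)+ℓ)) * suboptF C f (x t) := by rw [hfrac]
    have iter : ∀ t, N + 1 ≤ t → suboptF C f (x t) ≤
        suboptF C f (x (N+1)) * ∏ k ∈ Finset.Ico (N+1) t, (((k:ℝ)+ε)/((k:ℝ)+ℓ)) := by
      intro t ht
      induction t, ht using Nat.le_induction with
      | base => simp
      | succ t ht ih =>
        have htn : (0:ℝ) ≤ (t:ℝ) := Nat.cast_nonneg t
        have hq : (0:ℝ) ≤ ((t:ℝ)+ε)/((t:ℝ)+ℓ) := by positivity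
        calc suboptF C f (x (t+1)) ≤ (((t:ℝ)+ε)/((t:ℝ)+ℓ)) * suboptF C f (x t) :=
              key t (hfail t ht)
          _ ≤ (((t:ℝ)+ε)/((t:ℝ)+ℓ)) *
              (suboptF C f (x (N+1)) * ∏ k ∈ Finset.Ico (N+1) t, (((k:ℝ)+ε)/((k:ℝ)+ℓ))) :=
              mul_le_mul_of_nonneg_left ih hq
          _ = suboptF C f (x (N+1)) * ∏ k ∈ Finset.Ico (N+1) (t+1), (((k:ℝ)+ε)/((k:ℝ)+ℓ)) := by
              rw [Finset.prod_Ico_succ_top ht]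
              ring
    intro t ht
    have hRt : N + 1 ≤ t := by omega
    have hSRnn : 0 ≤ suboptF C f (x (N+1)) := fw_subopt_nonneg hCcomp hCU hfdiff (hmem (N+1))
    have hpb := fw_prod_bound ℓ hℓ hε0 hεl (R := N+1) (t := t) (Nat.le_add_left 1 N) hRt
    have hratio : η (t - 1) / η (N + 1 - 1) = (((N+1:ℕ):ℝ)+ℓ-1)/((t:ℝ)+ℓ-1) := by
      rw [hη, hη]
      have ht2 : 2 ≤ t := by omega
      have hc1 : ((t-1:ℕ):ℝ) = (t:ℝ) - 1 := by
        have h1t : 1 ≤ t := by omega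
        push_cast [h1t]
        ring
      have hc2 : (N + 1 - 1 : ℕ) = N := by omega
      rw [hc1, hc2]
      have ht2r : (2:ℝ) ≤ (t:ℝ) := by exact_mod_cast ht2
      have hNn : (0:ℝ) ≤ (N:ℝ) := Nat.cast_nonneg N
      have e1 : (t:ℝ) - 1 + ℓ ≠ 0 := ne_of_gt (by linarith)
      have e2 : (N:ℝ) + ℓ ≠ 0 := ne_of_gt (by linarith)
      have e3 : (ℓ:ℝ) ≠ 0 := ne_of_gt (by linarith)
      have e4 : (t:ℝ) + ℓ - 1 ≠ 0 := ne_of_gt (by linarith)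
      push_cast
      field_simp
      ring
    calc suboptF C f (x t)
        ≤ suboptF C f (x (N+1)) * ∏ k ∈ Finset.Ico (N+1) t, (((k:ℝ)+ε)/((k:ℝ)+ℓ)) :=
          iter t hRt
      _ ≤ suboptF C f (x (N+1)) *
          (((((N+1:ℕ)):ℝ)+ℓ-1)/((t:ℝ)+ℓ-1)) ^ ((ℓ:ℝ)-ε) * Real.exp (ε * ℓ / (N+1:ℕ)) := by
          rw [mul_assoc]
          exact mul_le_mul_of_nonneg_left hpb hSRnn
      _ = suboptF C f (x (N+1)) * (η (t - 1) / η (N + 1 - 1)) ^ ((ℓ:ℝ) - ε) *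
          Real.exp (ε * ℓ / ((N+1:ℕ):ℝ)) := by rw [hratio]
end
end

section
/- Let C ⊆ ℝ^n be a compact convex set with span(C − C) = ℝ^n that is (α,p)-uniformly convex with respect to the C-norm ‖·‖_C for some α > 0 and p ≥ 2, and let f : ℝ^n → ℝ be convex, differentiable on an open set containing C, L-smooth over C with respect to ‖·‖_C for some L > 0, and have lower-bounded gradients: ‖∇f(x)‖_C* ≥ λ for all x ∈ C, for some λ > 0, where ‖·‖_C* is the dual norm of ‖·‖_C. Then (C,f) satisfies the strong (M,r)-growth property with M = L·(αλ)^{−2/p} and r = 2/p. -/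
open Set Finset Real Pointwise

noncomputable section

variable {n : ℕ}

/-- The affine-invariant `C`-norm: the gauge (Minkowski functional) of `½(C - C)`. -/
def CnormFn (C : Set (Eucl n)) : Eucl n → ℝ :=
  gauge ((2 : ℝ)⁻¹ • (C - C))

/-- The dual norm of the `C`-norm: `‖g‖_C* = sup {⟪g, x⟫ : ‖x‖_C ≤ 1}`. -/
def dualCnormFn (C : Set (Eucl n)) (g : Eucl n) : ℝ :=
  sSup ((fun x => (inner ℝ g x : ℝ)) '' {x : Eucl n | CnormFn C x ≤ 1})

/-- `f` satisfies a `(μ, θ)`-Hölderian error bound on `C` with respect to the norm-like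
function `nrm`. -/
def HolderianErrorBound (C : Set (Eucl n)) (f : Eucl n → ℝ) (nrm : Eucl n → ℝ)
    (μ θ : ℝ) : Prop :=
  ∀ x ∈ C,
    sInf ((fun y => nrm (x - y)) '' {y ∈ C | ∀ z ∈ C, f y ≤ f z}) ≤
      μ * (f x - sInf (f '' C)) ^ θ

/-- `f` is `L`-smooth over `C` with respect to the norm-like function `nrm`. -/
def SmoothOver (C : Set (Eucl n)) (f : Eucl n → ℝ) (nrm : Eucl n → ℝ) (L : ℝ) : Prop :=
  ∀ x ∈ C, ∀ y ∈ C,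
    f y ≤ f x + (inner ℝ (gradient f x) (y - x) : ℝ) + L / 2 * nrm (x - y) ^ 2

/-- `C` is `(α, p)`-uniformly convex with respect to the norm-like function `nrm`. -/
def UniformlyConvexSet (C : Set (Eucl n)) (nrm : Eucl n → ℝ) (α p : ℝ) : Prop :=
  ∀ x ∈ C, ∀ y ∈ C, ∀ γ ∈ Icc (0 : ℝ) 1, ∀ z : Eucl n, nrm z = 1 →
    γ • x + (1 - γ) • y + (γ * (1 - γ) * α * nrm (x - y) ^ p) • z ∈ C


section Aux

variable {n : ℕ}

/-- The unit "ball" set `½(C-C)` is symmetric. -/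
lemma cnorm_symm_set (C : Set (Eucl n)) {y : Eucl n}
    (hy : y ∈ (2 : ℝ)⁻¹ • (C - C)) : -y ∈ (2 : ℝ)⁻¹ • (C - C) := by
  obtain ⟨u, hu, rfl⟩ := hy
  obtain ⟨a, ha, b, hb, rfl⟩ := hu
  exact ⟨b - a, ⟨b, hb, a, ha, rfl⟩, by simp [smul_sub]⟩

lemma CnormFn_neg (C : Set (Eucl n)) (w : Eucl n) : CnormFn C (-w) = CnormFn C w :=
  gauge_neg (fun _ h => cnorm_symm_set C h) w

lemma CnormFn_smul (C : Set (Eucl n)) {c : ℝ} (hc : 0 ≤ c) (w : Eucl n) :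
    CnormFn C (c • w) = c * CnormFn C w :=
  gauge_smul_of_nonneg hc w

lemma CnormFn_nonneg (C : Set (Eucl n)) (w : Eucl n) : 0 ≤ CnormFn C w :=
  gauge_nonneg w

lemma CnormFn_pos (C : Set (Eucl n)) (hCcomp : IsCompact C) (hCconv : Convex ℝ C)
    (hCne : C.Nonempty) (hspan : Submodule.span ℝ (C - C) = ⊤) {w : Eucl n} (hw : w ≠ 0) :
    0 < CnormFn C w := by
  set D : Set (Eucl n) := (2 : ℝ)⁻¹ • (C - C) with hD
  have hDconv : Convex ℝ D := (hCconv.sub hCconv).smul _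
  have hDb : Bornology.IsBounded D :=
    (hCcomp.isBounded.sub hCcomp.isBounded).smul₀ _
  have hVb : Bornology.IsVonNBounded ℝ D := (NormedSpace.isVonNBounded_iff ℝ).2 hDb
  obtain ⟨c, hc⟩ := hCne
  have h0D : (0 : Eucl n) ∈ D := ⟨c - c, ⟨c, hc, c, hc, rfl⟩, by simp⟩
  have hspanD : Submodule.span ℝ D = ⊤ := by
    rw [hD, Submodule.span_smul_eq_of_isUnit _ _ (isUnit_iff_ne_zero.2 (by norm_num)), hspan]
  have haff' : ∀ y : Eucl n, y ∈ affineSpan ℝ D := by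
    intro y
    have hy : y ∈ Submodule.span ℝ D := hspanD ▸ Submodule.mem_top
    induction hy using Submodule.span_induction with
    | mem d hd => exact subset_affineSpan ℝ D hd
    | zero => exact subset_affineSpan ℝ D h0D
    | add a b _ _ ha hb =>
        have h1 : a -ᵥ (0 : Eucl n) ∈ (affineSpan ℝ D).direction :=
          AffineSubspace.vsub_mem_direction ha (subset_affineSpan ℝ D h0D)
        have h2 := AffineSubspace.vadd_mem_of_mem_direction h1 hb
        simpa using h2
    | smul c' a _ ha =>
        have h1 : a -ᵥ (0 : Eucl n) ∈ (affineSpan ℝ D).direction :=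
          AffineSubspace.vsub_mem_direction ha (subset_affineSpan ℝ D h0D)
        have h1' := Submodule.smul_mem _ c' h1
        have h2 := AffineSubspace.vadd_mem_of_mem_direction h1' (subset_affineSpan ℝ D h0D)
        simpa using h2
  have haff : affineSpan ℝ D = ⊤ := by
    rw [eq_top_iff]
    intro y _
    exact haff' y
  have hint : (interior D).Nonempty :=
    (hDconv.interior_nonempty_iff_affineSpan_eq_top).2 haff
  obtain ⟨u, hu⟩ := hint
  have hnegD : -D = D := by
    ext y
    simp only [Set.mem_neg]
    exact ⟨fun h => by simpa using cnorm_symm_set C h, fun h => cnorm_symm_set C h⟩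
  have hnegint : -interior D ⊆ interior D := by
    refine interior_maximal ?_ isOpen_interior.neg
    refine Set.Subset.trans (Set.neg_subset_neg.2 interior_subset) ?_
    rw [hnegD]
  have hnu : -u ∈ interior D := hnegint (Set.neg_mem_neg.2 hu)
  have hconvint : Convex ℝ (interior D) := hDconv.interior
  have h0int : (0 : Eucl n) ∈ interior D := by
    have h2 := hconvint hu hnu (by norm_num : (0:ℝ) ≤ 1/2)
      (by norm_num : (0:ℝ) ≤ 1/2) (by norm_num)
    have he : (1/2 : ℝ) • u + (1/2 : ℝ) • (-u) = (0 : Eucl n) := by module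
    rwa [he] at h2
  have hnhds : D ∈ nhds (0 : Eucl n) := mem_interior_iff_mem_nhds.1 h0int
  have habs : Absorbent ℝ D := absorbent_nhds_zero hnhds
  exact (gauge_pos habs hVb).2 hw

end Aux

/-- **Proposition (strong growth from uniform convexity of `C` and lower-bounded gradients).** -/
theorem strong_growth_of_uniformly_convex_lower_bounded_gradients
    (n : ℕ) (C : Set (Eucl n)) (f : Eucl n → ℝ)
    (hCcomp : IsCompact C) (hCconv : Convex ℝ C) (hCne : C.Nonempty)
    (hspan : Submodule.span ℝ (C - C) = ⊤)
    (α p : ℝ) (hα : 0 < α) (hp : 2 ≤ p)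
    (hunif : UniformlyConvexSet C (CnormFn C) α p)
    (hfconv : ConvexOn ℝ C f)
    (U : Set (Eucl n)) (hUopen : IsOpen U) (hCU : C ⊆ U)
    (hfdiff : DifferentiableOn ℝ f U)
    (L : ℝ) (hL : 0 < L) (hsmooth : SmoothOver C f (CnormFn C) L)
    (lam : ℝ) (hlam : 0 < lam)
    (hgrad : ∀ x ∈ C, lam ≤ dualCnormFn C (gradient f x)) :
    StrongGrowth C f (L * (α * lam) ^ (-(2 / p))) (2 / p) :=  by
  intro x hx v hv η hη
  obtain ⟨hvC, hvmin⟩ := hv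
  obtain ⟨hη0, hη1⟩ := hη
  set g : Eucl n := gradient f x with hgdef
  set N : ℝ := CnormFn C (x - v) with hNdef
  have hN0 : 0 ≤ N := CnormFn_nonneg C _
  have hp0 : (0 : ℝ) < p := by linarith
  -- gap facts
  have hub : ∀ y ∈ C, (inner ℝ g (x - y) : ℝ) ≤ (inner ℝ g (x - v) : ℝ) := by
    intro y hy
    rw [inner_sub_right, inner_sub_right]
    have := hvmin y hy
    linarith
  have hbdd : BddAbove ((fun y => (inner ℝ g (x - y) : ℝ)) '' C) := by
    refine ⟨(inner ℝ g (x - v) : ℝ), ?_⟩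
    rintro _ ⟨y, hy, rfl⟩
    exact hub y hy
  have hgap_ge : ∀ y ∈ C, (inner ℝ g (x - y) : ℝ) ≤ gapF C f x := by
    intro y hy
    exact le_csSup hbdd ⟨y, hy, rfl⟩
  have hgapv : gapF C f x = (inner ℝ g (x - v) : ℝ) := by
    refine le_antisymm ?_ (hgap_ge v hvC)
    refine csSup_le ⟨_, ⟨x, hx, rfl⟩⟩ ?_
    rintro _ ⟨y, hy, rfl⟩
    exact hub y hy
  have hgap0 : 0 ≤ gapF C f x := by
    have := hgap_ge x hx
    simpa using this
  -- key inequality : α * lam * N ^ p ≤ gap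
  have key : α * lam * N ^ p ≤ gapF C f x := by
    set A : ℝ := α * lam * N ^ p with hAdef
    have hNp0 : 0 ≤ N ^ p := Real.rpow_nonneg hN0 p
    have h1 : ∀ t ∈ Ioo (0:ℝ) 1, (1 - t) ^ 2 * A ≤ gapF C f x := by
      intro t ht
      obtain ⟨ht0, ht1⟩ := ht
      -- find z with CnormFn C z = 1 and (1-t)*lam < ⟪g, z⟫
      have hlt : (1 - t) * lam < dualCnormFn C g := by
        have h2 : (1 - t) * lam < lam := by nlinarith
        exact lt_of_lt_of_le h2 (hgrad x hx)
      rw [dualCnormFn] at hlt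
      have hne0 : ((fun y => (inner ℝ g y : ℝ)) '' {y : Eucl n | CnormFn C y ≤ 1}).Nonempty :=
        ⟨_, ⟨0, by simp [CnormFn, gauge_zero], rfl⟩⟩
      obtain ⟨_, ⟨w, hw, rfl⟩, hwg⟩ := exists_lt_of_lt_csSup hne0 hlt
      have hwgpos : (0 : ℝ) < (inner ℝ g w : ℝ) := lt_of_le_of_lt (by nlinarith) hwg
      have hwne : w ≠ 0 := by
        intro h
        rw [h, inner_zero_right] at hwgpos
        exact lt_irrefl 0 hwgpos
      have hρ : 0 < CnormFn C w := CnormFn_pos C hCcomp hCconv hCne hspan hwne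
      set z : Eucl n := (CnormFn C w)⁻¹ • w with hzdef
      have hz1 : CnormFn C z = 1 := by
        rw [hzdef, CnormFn_smul C (inv_nonneg.2 hρ.le), inv_mul_cancel₀ hρ.ne']
      have hρinv : 1 ≤ (CnormFn C w)⁻¹ := (one_le_inv₀ hρ).2 hw
      have hzg : (1 - t) * lam < (inner ℝ g z : ℝ) := by
        rw [hzdef, real_inner_smul_right]
        calc (1 - t) * lam < (inner ℝ g w : ℝ) := hwg
          _ ≤ (CnormFn C w)⁻¹ * (inner ℝ g w : ℝ) := le_mul_of_one_le_left hwgpos.le hρinv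
      have hz1' : CnormFn C (-z) = 1 := by rw [CnormFn_neg]; exact hz1
      -- apply uniform convexity
      have hyC := hunif x hx v hvC t ⟨ht0.le, ht1.le⟩ (-z) hz1'
      have hgy := hgap_ge _ hyC
      -- expand the inner product
      rw [← hNdef] at hgy
      have hexpand : (inner ℝ g (x - (t • x + (1 - t) • v +
          (t * (1 - t) * α * N ^ p) • (-z))) : ℝ) =
          (1 - t) * (inner ℝ g (x - v) : ℝ) + (t * (1 - t) * α * N ^ p) * (inner ℝ g z : ℝ) := by
        simp only [inner_sub_right, inner_add_right, real_inner_smul_right, inner_neg_right]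
        ring
      rw [hexpand, ← hgapv] at hgy
      have hδ0 : 0 ≤ t * (1 - t) * α * N ^ p :=
        mul_nonneg (mul_nonneg (mul_nonneg ht0.le (by linarith)) hα.le) hNp0
      have hstep : t * (1 - t) * α * N ^ p * ((1 - t) * lam) ≤
          t * (1 - t) * α * N ^ p * (inner ℝ g z : ℝ) :=
        mul_le_mul_of_nonneg_left hzg.le hδ0
      have ht' : t * ((1 - t) ^ 2 * A) ≤ t * gapF C f x := by
        rw [hAdef]; nlinarith [hgy, hstep]
      exact le_of_mul_le_mul_left ht' ht0
    have h2 : Filter.Tendsto (fun t : ℝ => (1 - t) ^ 2 * A) (nhdsWithin 0 (Ioi 0)) (nhds A) := by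
      have hc : Continuous (fun t : ℝ => (1 - t) ^ 2 * A) := ((continuous_const.sub continuous_id).pow 2).mul continuous_const
      have := hc.continuousAt (x := (0:ℝ))
      have h3 : Filter.Tendsto (fun t : ℝ => (1 - t) ^ 2 * A) (nhds 0)
          (nhds ((1 - (0:ℝ)) ^ 2 * A)) := this
      simp only [sub_zero, one_pow, one_mul] at h3
      exact h3.mono_left nhdsWithin_le_nhds
    refine le_of_tendsto h2 ?_
    filter_upwards [Ioo_mem_nhdsGT_of_mem (Set.mem_Ico.2 ⟨le_refl (0:ℝ), one_pos⟩)]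
      with t ht using h1 t ht
  -- smoothness step
  have hyC2 : x + η • (v - x) ∈ C := by
    have h := hCconv hx hvC (by linarith : (0:ℝ) ≤ 1 - η) hη0 (by ring)
    have he : (1 - η) • x + η • v = x + η • (v - x) := by module
    rwa [he] at h
  have hsm := hsmooth x hx (x + η • (v - x)) hyC2
  have harg : x - (x + η • (v - x)) = η • (x - v) := by module
  rw [harg, CnormFn_smul C hη0, ← hNdef] at hsm
  have hbreg : bregmanD f (x + η • (v - x)) x ≤ L / 2 * (η * N) ^ 2 := by
    unfold bregmanD
    rw [← hgdef]
    have : (inner ℝ g (x + η • (v - x) - x) : ℝ) = (inner ℝ g (x + η • (v - x) - x) : ℝ) := rfl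
    linarith [hsm]
  -- from key inequality to the norm bound
  have hal : (0:ℝ) < α * lam := by positivity
  have hNp : N ^ p ≤ gapF C f x / (α * lam) := by
    rw [le_div_iff₀ hal]
    calc N ^ p * (α * lam) = α * lam * N ^ p := by ring
      _ ≤ gapF C f x := key
  have hN2 : N ^ (2:ℕ) ≤ gapF C f x ^ (2/p) * ((α * lam) ^ (2/p))⁻¹ := by
    have e1 : N ^ (2:ℕ) = (N ^ p) ^ (2/p) := by
      rw [← Real.rpow_natCast N 2, ← Real.rpow_mul hN0]
      congr 1
      field_simp
      norm_num
    have e2 : (N ^ p) ^ (2/p) ≤ (gapF C f x / (α * lam)) ^ (2/p) :=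
      Real.rpow_le_rpow (Real.rpow_nonneg hN0 p) hNp (by positivity)
    have e3 : (gapF C f x / (α * lam)) ^ (2/p) =
        gapF C f x ^ (2/p) * ((α * lam) ^ (2/p))⁻¹ := by
      rw [Real.div_rpow hgap0 hal.le, div_eq_mul_inv]
    rw [e1]
    rw [e3] at e2
    exact e2
  -- conclude
  have hrw : L * (α * lam) ^ (-(2 / p)) * η ^ 2 / 2 * gapF C f x ^ (2 / p) =
      L * η ^ 2 / 2 * (gapF C f x ^ (2/p) * ((α * lam) ^ (2/p))⁻¹) := by
    rw [Real.rpow_neg hal.le]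
    ring
  rw [hrw]
  calc bregmanD f (x + η • (v - x)) x ≤ L / 2 * (η * N) ^ 2 := hbreg
    _ = L * η ^ 2 / 2 * N ^ (2:ℕ) := by ring
    _ ≤ L * η ^ 2 / 2 * (gapF C f x ^ (2/p) * ((α * lam) ^ (2/p))⁻¹) := by
        apply mul_le_mul_of_nonneg_left hN2 (by positivity)
end
end

section
/- Let C ⊆ ℝ^n be a compact convex set with span(C − C) = ℝ^n that is (α,p)-uniformly convex with respect to the C-norm ‖·‖_C for some α > 0 and p ≥ 2, and let f : ℝ^n → ℝ be convex, differentiable on an open set containing C, L-smooth over C with respect to ‖·‖_C for some L > 0, and satisfy a (μ,θ)-Hölderian error bound with respect to ‖·‖_C for some μ > 0 and θ ∈ [0,1/2]. Then (C,f) satisfies the weak (M,r)-growth property with M = L·(μ/α)^{2/p} and r = 2θ/p. -/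
open Set Finset Real Pointwise

set_option maxHeartbeats 1000000

noncomputable section

variable {n : ℕ}

section AuxGradIneq

variable {n : ℕ}

/-- Gradient inequality for a convex differentiable function. -/
lemma grad_ineq_aux {C U : Set (Eucl n)} {f : Eucl n → ℝ}
    (hCconv : Convex ℝ C) (hfconv : ConvexOn ℝ C f)
    (hUopen : IsOpen U) (hCU : C ⊆ U) (hfdiff : DifferentiableOn ℝ f U)
    {x y : Eucl n} (hx : x ∈ C) (hy : y ∈ C) :
    f x + (inner ℝ (gradient f x) (y - x) : ℝ) ≤ f y := by
  have hgrad : HasGradientAt f (gradient f x) x :=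
    hfdiff.hasGradientAt (hUopen.mem_nhds (hCU hx))
  have hfd : HasFDerivAt f (InnerProductSpace.toDual ℝ (Eucl n) (gradient f x)) x :=
    hasGradientAt_iff_hasFDerivAt.mp hgrad
  set A : ℝ →ᵃ[ℝ] Eucl n := AffineMap.lineMap x y with hA
  set φ : ℝ → ℝ := fun t => f (A t) with hφ
  have hsub : Icc (0:ℝ) 1 ⊆ A ⁻¹' C := fun t ht => hCconv.lineMap_mem hx hy ht
  have hconv : ConvexOn ℝ (Icc (0:ℝ) 1) φ :=
    ((hfconv.comp_affineMap A).subset hsub (convex_Icc 0 1))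
  have hpath : HasDerivAt (fun t : ℝ => A t) (y - x) 0 := by
    have h1 : HasDerivAt (fun t : ℝ => t • (y - x) + x) ((1:ℝ) • (y - x)) 0 :=
      ((hasDerivAt_id (0:ℝ)).smul_const (y - x)).add_const x
    have h2 : (fun t : ℝ => A t) = fun t : ℝ => t • (y - x) + x := by
      funext t
      simp [hA, AffineMap.lineMap_apply, vsub_eq_sub, vadd_eq_add]
    rw [h2]
    simpa using h1
  have hderiv : HasDerivAt φ ((inner ℝ (gradient f x) (y - x) : ℝ)) 0 := by
    have hfd' : HasFDerivAt f (InnerProductSpace.toDual ℝ (Eucl n) (gradient f x))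
        ((fun t : ℝ => A t) 0) := by
      have : (fun t : ℝ => A t) 0 = x := by simp [hA]
      rw [this]; exact hfd
    have := hfd'.comp_hasDerivAt 0 hpath
    have e : (inner ℝ (gradient f x) (y - x) : ℝ)
        = InnerProductSpace.toDual ℝ (Eucl n) (gradient f x) (y - x) :=
      InnerProductSpace.toDual_apply_apply.symm
    rw [e]; exact this
  have hslope := hconv.le_slope_of_hasDerivAt (left_mem_Icc.mpr zero_le_one)
    (right_mem_Icc.mpr zero_le_one) zero_lt_one hderiv
  have hA1 : φ 1 = f y := by simp [hφ, hA]
  have hA0' : φ 0 = f x := by simp [hφ, hA]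
  rw [slope_def_field, hA1, hA0'] at hslope
  have he : ((f y - f x) / (1 - 0) : ℝ) = f y - f x := by norm_num
  rw [he] at hslope
  linarith

end AuxGradIneq

/-- **Proposition (weak growth from uniform convexity of `C` and a Hölderian error bound).** -/

theorem weak_growth_of_uniformly_convex_heb
    (n : ℕ) (C : Set (Eucl n)) (f : Eucl n → ℝ)
    (hCcomp : IsCompact C) (hCconv : Convex ℝ C) (hCne : C.Nonempty)
    (hspan : Submodule.span ℝ (C - C) = ⊤)
    (α p : ℝ) (hα : 0 < α) (hp : 2 ≤ p)
    (hunif : UniformlyConvexSet C (CnormFn C) α p)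
    (hfconv : ConvexOn ℝ C f)
    (U : Set (Eucl n)) (hUopen : IsOpen U) (hCU : C ⊆ U)
    (hfdiff : DifferentiableOn ℝ f U)
    (L : ℝ) (hL : 0 < L) (hsmooth : SmoothOver C f (CnormFn C) L)
    (μ θ : ℝ) (hμ : 0 < μ) (hθ : θ ∈ Icc (0 : ℝ) (1 / 2))
    (hHEB : HolderianErrorBound C f (CnormFn C) μ θ) :
    WeakGrowth C f (L * (μ / α) ^ (2 / p)) (2 * θ / p) := by
  have hp0 : (0:ℝ) < p := lt_of_lt_of_le two_pos hp
  -- basic facts about the set s = ½(C - C)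
  set s : Set (Eucl n) := (2:ℝ)⁻¹ • (C - C) with hs_def
  have hCnormEq : CnormFn C = gauge s := rfl
  have hs_symm : ∀ w ∈ s, -w ∈ s := by
    rintro w hw
    rw [hs_def, Set.mem_smul_set] at hw ⊢
    obtain ⟨u, hu, rfl⟩ := hw
    rw [Set.mem_sub] at hu
    obtain ⟨a, ha, b, hb, rfl⟩ := hu
    exact ⟨b - a, Set.sub_mem_sub hb ha, by rw [← smul_neg, neg_sub]⟩
  have hs_conv : Convex ℝ s := (hCconv.sub hCconv).smul _
  have hs_cpt : IsCompact s := by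
    have h1 : IsCompact (C - C) := by
      have : C - C = (fun q : Eucl n × Eucl n => q.1 - q.2) '' (C ×ˢ C) := by
        ext w
        simp only [Set.mem_sub, Set.mem_image, Prod.exists, Set.mem_prod]
        tauto
      rw [this]
      exact (hCcomp.prod hCcomp).image (continuous_fst.sub continuous_snd)
    exact h1.smul _
  have hs_vnb : Bornology.IsVonNBounded ℝ s :=
    (NormedSpace.isVonNBounded_iff ℝ).mpr hs_cpt.isBounded
  have h0s : (0 : Eucl n) ∈ s := by
    obtain ⟨c, hc⟩ := hCne
    rw [hs_def, Set.mem_smul_set]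
    exact ⟨c - c, Set.sub_mem_sub hc hc, by simp⟩
  have hspan_s : Submodule.span ℝ s = ⊤ := by
    rw [eq_top_iff, ← hspan]
    apply Submodule.span_le.mpr
    intro w hw
    have h2 : (2:ℝ)⁻¹ • w ∈ s := by
      rw [hs_def]; exact Set.smul_mem_smul_set hw
    have h3 := Submodule.smul_mem (Submodule.span ℝ s) (2:ℝ) (Submodule.subset_span h2)
    have h4 : (2:ℝ) • (2:ℝ)⁻¹ • w = w := by
      rw [smul_smul]; norm_num
    rwa [h4] at h3
  have hvs : vectorSpan ℝ s = ⊤ := by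
    rw [eq_top_iff, ← hspan_s]
    apply Submodule.span_le.mpr
    intro w hw
    have : w ∈ s -ᵥ s := ⟨w, hw, 0, h0s, by simp [vsub_eq_sub]⟩
    exact Submodule.subset_span this
  have haff : affineSpan ℝ s = ⊤ :=
    (AffineSubspace.affineSpan_eq_top_iff_vectorSpan_eq_top_of_nonempty ℝ (Eucl n) (Eucl n)
      ⟨0, h0s⟩).mpr hvs
  have hint : (interior s).Nonempty :=
    hs_conv.interior_nonempty_iff_affineSpan_eq_top.mpr haff
  have h0int : (0 : Eucl n) ∈ interior s := by
    obtain ⟨u, hu⟩ := hint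
    have hnu : -u ∈ s := hs_symm u (interior_subset hu)
    have := hs_conv.combo_interior_self_mem_interior hu hnu
      (by norm_num : (0:ℝ) < 1/2) (by norm_num : (0:ℝ) ≤ 1/2) (by norm_num)
    simpa using this
  have habs : Absorbent ℝ s := absorbent_nhds_zero (mem_interior_iff_mem_nhds.mp h0int)
  have hgauge_nonneg : ∀ w : Eucl n, 0 ≤ CnormFn C w := fun w => gauge_nonneg w
  have hgauge_zero : ∀ w : Eucl n, CnormFn C w = 0 → w = 0 := by
    intro w hw
    exact (gauge_eq_zero habs hs_vnb).mp hw
  have hgauge_neg : ∀ w : Eucl n, CnormFn C (-w) = CnormFn C w := fun w =>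
    gauge_neg hs_symm w
  have hgauge_smul : ∀ (a : ℝ), 0 ≤ a → ∀ w : Eucl n,
      CnormFn C (a • w) = a * CnormFn C w := by
    intro a ha w
    rw [hCnormEq, gauge_smul_of_nonneg ha, smul_eq_mul]
  -- now the main argument
  intro x hx v hv η hη
  have hcont : ContinuousOn f C := (hfdiff.continuousOn).mono hCU
  have hbdd : BddAbove ((fun y => (inner ℝ (gradient f x) (x - y) : ℝ)) '' C) :=
    (hCcomp.image (Continuous.inner continuous_const
      (continuous_const.sub continuous_id))).bddAbove
  have hgap_ge : ∀ y ∈ C, (inner ℝ (gradient f x) (x - y) : ℝ) ≤ gapF C f x := by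
    intro y hy
    exact le_csSup hbdd ⟨y, hy, rfl⟩
  have hgap0 : 0 ≤ gapF C f x := by
    have := hgap_ge x hx
    simpa using this
  have hgapv : gapF C f x = (inner ℝ (gradient f x) (x - v) : ℝ) := by
    apply le_antisymm
    · apply csSup_le (hCne.image _)
      rintro t ⟨y, hy, rfl⟩
      have h1 := hv.2 y hy
      simp only [inner_sub_right]
      linarith
    · exact le_csSup hbdd ⟨v, hv.1, rfl⟩
  obtain ⟨xm, hxmC, hxm⟩ := hCcomp.exists_isMinOn hCne hcont
  have hxm' : ∀ y ∈ C, f xm ≤ f y := fun y hy => isMinOn_iff.mp hxm y hy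
  have hInf : sInf (f '' C) = f xm := by
    apply le_antisymm
    · exact csInf_le (hCcomp.image_of_continuousOn hcont).bddBelow ⟨xm, hxmC, rfl⟩
    · apply le_csInf (hCne.image f)
      rintro t ⟨y, hy, rfl⟩
      exact hxm' y hy
  have hsub0 : 0 ≤ suboptF C f x := by
    rw [suboptF, hInf]
    have := hxm' x hx
    linarith
  have hsle : suboptF C f x ≤ gapF C f x := by
    have h1 := grad_ineq_aux hCconv hfconv hUopen hCU hfdiff hx hxmC
    have h2 := hgap_ge xm hxmC
    have e1 : (inner ℝ (gradient f x) (xm - x) : ℝ)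
        = inner ℝ (gradient f x) xm - (inner ℝ (gradient f x) x : ℝ) := inner_sub_right _ _ _
    have e2 : (inner ℝ (gradient f x) (x - xm) : ℝ)
        = inner ℝ (gradient f x) x - (inner ℝ (gradient f x) xm : ℝ) := inner_sub_right _ _ _
    rw [suboptF, hInf]
    linarith
  set N : ℝ := CnormFn C (v - x) with hNdef
  have hNnn : 0 ≤ N := hgauge_nonneg _
  have hNp_nn : 0 ≤ N ^ p := Real.rpow_nonneg hNnn p
  -- the scaling inequality
  have hkey : ∀ z : Eucl n, CnormFn C z = 1 →
      α * N ^ p * (inner ℝ (gradient f x) z : ℝ) ≤ gapF C f x := by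
    intro z hz
    set G : ℝ := gapF C f x with hG
    set Aq : ℝ := α * N ^ p * (inner ℝ (gradient f x) z : ℝ) with hAq
    have hz' : CnormFn C (-z) = 1 := by rw [hgauge_neg]; exact hz
    have hγle : ∀ γ : ℝ, 0 < γ → γ < 1 → γ * Aq ≤ G := by
      intro γ hγ0 hγ1
      have hm : γ • v + (1 - γ) • x + (γ * (1 - γ) * α * CnormFn C (v - x) ^ p) • (-z) ∈ C :=
        hunif v hv.1 x hx γ ⟨hγ0.le, hγ1.le⟩ (-z) hz'
      have hle := hgap_ge _ hm
      have hexp : (inner ℝ (gradient f x)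
          (x - (γ • v + (1 - γ) • x + (γ * (1 - γ) * α * CnormFn C (v - x) ^ p) • (-z))) : ℝ)
          = γ * (inner ℝ (gradient f x) (x - v) : ℝ) + γ * (1 - γ) * Aq := by
        simp only [inner_sub_right, inner_add_right, real_inner_smul_right, inner_neg_right,
          hAq, ← hNdef]
        ring
      rw [hexp, ← hgapv] at hle
      have h3 : (1 - γ) * (γ * Aq) ≤ (1 - γ) * G := by nlinarith
      exact le_of_mul_le_mul_left h3 (by linarith)
    by_contra hcon
    push_neg at hcon
    have hApos : 0 < Aq := lt_of_le_of_lt hgap0 hcon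
    have hd : G / Aq < 1 := (div_lt_one hApos).mpr hcon
    have hd0 : 0 ≤ G / Aq := div_nonneg hgap0 hApos.le
    have h5 := hγle ((G / Aq + 1) / 2) (by linarith) (by linarith)
    have h6 : G / Aq * Aq = G := div_mul_cancel₀ _ hApos.ne'
    nlinarith
  -- split on suboptimality
  rcases eq_or_lt_of_le hsub0 with hsubeq | hsubpos
  · -- suboptF = 0 case
    rw [← hsubeq, Real.zero_rpow, mul_zero]
    · apply mul_nonneg _ hgap0
      apply div_nonneg _ (by norm_num : (0:ℝ) ≤ 2)
      apply mul_nonneg (mul_nonneg hL.le (Real.rpow_nonneg (by positivity) _)) (sq_nonneg η)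
    · have h1 : 2 * θ / p ≤ 1 / 2 := by
        rw [div_le_div_iff₀ hp0 (by norm_num : (0:ℝ) < 2)]
        nlinarith [hθ.2, hθ.1]
      intro hcon
      linarith
  · -- suboptF > 0 case
    have hgappos : 0 < gapF C f x := lt_of_lt_of_le hsubpos hsle
    -- HEB step, with epsilon slack
    have hN2 : ∀ ε : ℝ, 0 < ε →
        α * N ^ p * suboptF C f x ≤ (μ * suboptF C f x ^ θ + ε) * gapF C f x := by
      intro ε hε
      have hheb := hHEB x hx
      have hne' : ((fun y => CnormFn C (x - y)) '' {y ∈ C | ∀ z ∈ C, f y ≤ f z}).Nonempty :=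
        ⟨_, ⟨xm, ⟨hxmC, hxm'⟩, rfl⟩⟩
      have hheb2 : sInf ((fun y => CnormFn C (x - y)) '' {y ∈ C | ∀ z ∈ C, f y ≤ f z})
          ≤ μ * suboptF C f x ^ θ := hheb
      have hlt : sInf ((fun y => CnormFn C (x - y)) '' {y ∈ C | ∀ z ∈ C, f y ≤ f z})
          < μ * suboptF C f x ^ θ + ε := by linarith
      obtain ⟨d, ⟨ys, hysmem, rfl⟩, hdlt⟩ := exists_lt_of_csInf_lt hne' hlt
      obtain ⟨hysC, hysmin⟩ := hysmem
      have hfys : sInf (f '' C) = f ys := by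
        apply le_antisymm
        · exact csInf_le (hCcomp.image_of_continuousOn hcont).bddBelow ⟨ys, hysC, rfl⟩
        · exact le_csInf (hCne.image f) (by rintro t ⟨y, hy, rfl⟩; exact hysmin y hy)
      have hsub_le : suboptF C f x ≤ (inner ℝ (gradient f x) (x - ys) : ℝ) := by
        have h1 := grad_ineq_aux hCconv hfconv hUopen hCU hfdiff hx hysC
        have e1 : (inner ℝ (gradient f x) (ys - x) : ℝ)
            = inner ℝ (gradient f x) ys - (inner ℝ (gradient f x) x : ℝ) := inner_sub_right _ _ _
        have e2 : (inner ℝ (gradient f x) (x - ys) : ℝ)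
            = inner ℝ (gradient f x) x - (inner ℝ (gradient f x) ys : ℝ) := inner_sub_right _ _ _
        rw [suboptF, hfys]
        linarith
      set c : ℝ := CnormFn C (x - ys) with hcdef
      have hcnn : 0 ≤ c := hgauge_nonneg _
      rcases eq_or_lt_of_le hcnn with hc0 | hcpos
      · -- c = 0 forces x = ys, contradicting suboptF > 0
        exfalso
        have hxy : x - ys = 0 := hgauge_zero _ hc0.symm
        rw [hxy, inner_zero_right] at hsub_le
        linarith
      · set z : Eucl n := c⁻¹ • (x - ys) with hzdef
        have hz1 : CnormFn C z = 1 := by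
          rw [hzdef, hgauge_smul c⁻¹ (inv_nonneg.mpr hcnn) _, ← hcdef,
            inv_mul_cancel₀ hcpos.ne']
        have hxyz : x - ys = c • z := by
          rw [hzdef, smul_inv_smul₀ hcpos.ne']
        have hinner : (inner ℝ (gradient f x) (x - ys) : ℝ)
            = c * (inner ℝ (gradient f x) z : ℝ) := by
          rw [hxyz, real_inner_smul_right]
        have step1 : α * N ^ p * suboptF C f x
            ≤ α * N ^ p * (c * (inner ℝ (gradient f x) z : ℝ)) := by
          apply mul_le_mul_of_nonneg_left _ (by positivity)
          rw [← hinner]; exact hsub_le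
        have step2 : α * N ^ p * (c * (inner ℝ (gradient f x) z : ℝ))
            = c * (α * N ^ p * (inner ℝ (gradient f x) z : ℝ)) := by ring
        have step3 : c * (α * N ^ p * (inner ℝ (gradient f x) z : ℝ)) ≤ c * gapF C f x :=
          mul_le_mul_of_nonneg_left (hkey z hz1) hcpos.le
        have step4 : c * gapF C f x ≤ (μ * suboptF C f x ^ θ + ε) * gapF C f x :=
          mul_le_mul_of_nonneg_right hdlt.le hgap0
        linarith [step1, step2 ▸ step1, step3, step4]
    -- remove the epsilon
    have hmain : α * N ^ p * suboptF C f x ≤ μ * suboptF C f x ^ θ * gapF C f x := by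
      by_contra hcon
      push_neg at hcon
      set A' : ℝ := α * N ^ p * suboptF C f x
      set B' : ℝ := μ * suboptF C f x ^ θ * gapF C f x
      have hd : 0 < (A' - B') / (2 * gapF C f x) := by
        apply div_pos (by linarith) (by linarith)
      have := hN2 _ hd
      have hexp : (μ * suboptF C f x ^ θ + (A' - B') / (2 * gapF C f x)) * gapF C f x
          = B' + (A' - B') / 2 := by
        field_simp
        ring
      rw [hexp] at this
      linarith
    -- smoothness bound on the Bregman divergence
    have hyC : x + η • (v - x) ∈ C := hCconv.add_smul_sub_mem hx hv.1 hη
    have hxy' : x - (x + η • (v - x)) = η • (x - v) := by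
      rw [smul_sub, smul_sub]; abel
    have hnorm : CnormFn C (x - (x + η • (v - x))) = η * N := by
      rw [hxy', hgauge_smul η hη.1, hNdef, show x - v = -(v - x) from (neg_sub v x).symm,
        hgauge_neg]
    have hD : bregmanD f (x + η • (v - x)) x ≤ L / 2 * (η * N) ^ 2 := by
      have h1 := hsmooth x hx (x + η • (v - x)) hyC
      rw [hnorm] at h1
      rw [bregmanD]
      linarith
    -- power manipulations
    have hNp_le : N ^ p ≤ μ / α * suboptF C f x ^ (θ - 1) * gapF C f x := by
      rw [Real.rpow_sub hsubpos, Real.rpow_one]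
      have heq : μ / α * (suboptF C f x ^ θ / suboptF C f x) * gapF C f x
          = μ * suboptF C f x ^ θ * gapF C f x / (α * suboptF C f x) := by
        field_simp
      rw [heq, le_div_iff₀ (by positivity)]
      have : N ^ p * (α * suboptF C f x) = α * N ^ p * suboptF C f x := by ring
      rw [this]
      exact hmain
    have h2p : (0:ℝ) ≤ 2 / p := by positivity
    have hpow : (N ^ p) ^ (2 / p) = N ^ (2:ℕ) := by
      rw [← Real.rpow_natCast N 2, ← Real.rpow_mul hNnn]
      congr 1
      field_simp
      norm_num
    have hmono : N ^ (2:ℕ) ≤ (μ / α * suboptF C f x ^ (θ - 1) * gapF C f x) ^ (2 / p) := by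
      rw [← hpow]
      exact Real.rpow_le_rpow hNp_nn hNp_le h2p
    have hsplit : (μ / α * suboptF C f x ^ (θ - 1) * gapF C f x) ^ (2 / p)
        = (μ / α) ^ (2 / p) * suboptF C f x ^ ((θ - 1) * (2 / p)) * gapF C f x ^ (2 / p) := by
      rw [Real.mul_rpow (by positivity) hgap0,
        Real.mul_rpow (by positivity) (Real.rpow_nonneg hsubpos.le _),
        ← Real.rpow_mul hsubpos.le]
    have e1 : suboptF C f x ^ ((θ - 1) * (2 / p)) * suboptF C f x ^ (1 - 2 * θ / p)
        = suboptF C f x ^ (1 - 2 / p) := by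
      rw [← Real.rpow_add hsubpos]
      congr 1
      field_simp
      ring
    have e2 : suboptF C f x ^ (1 - 2 / p) ≤ gapF C f x ^ (1 - 2 / p) := by
      apply Real.rpow_le_rpow hsubpos.le hsle
      have : 2 / p ≤ 1 := by
        rw [div_le_one hp0]; exact hp
      linarith
    have e3 : gapF C f x ^ (2 / p) * gapF C f x ^ (1 - 2 / p) = gapF C f x := by
      rw [← Real.rpow_add hgappos]
      norm_num
    have hsr_nn : 0 ≤ suboptF C f x ^ (1 - 2 * θ / p) := Real.rpow_nonneg hsubpos.le _
    have hfinal : N ^ (2:ℕ) * suboptF C f x ^ (1 - 2 * θ / p)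
        ≤ (μ / α) ^ (2 / p) * gapF C f x := by
      calc N ^ (2:ℕ) * suboptF C f x ^ (1 - 2 * θ / p)
          ≤ ((μ / α) ^ (2 / p) * suboptF C f x ^ ((θ - 1) * (2 / p)) * gapF C f x ^ (2 / p))
            * suboptF C f x ^ (1 - 2 * θ / p) := by
            apply mul_le_mul_of_nonneg_right _ hsr_nn
            rw [← hsplit]; exact hmono
        _ = (μ / α) ^ (2 / p) * (gapF C f x ^ (2 / p)
            * (suboptF C f x ^ ((θ - 1) * (2 / p)) * suboptF C f x ^ (1 - 2 * θ / p))) := by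
            ring
        _ = (μ / α) ^ (2 / p) * (gapF C f x ^ (2 / p) * suboptF C f x ^ (1 - 2 / p)) := by
            rw [e1]
        _ ≤ (μ / α) ^ (2 / p) * (gapF C f x ^ (2 / p) * gapF C f x ^ (1 - 2 / p)) := by
            apply mul_le_mul_of_nonneg_left _ (by positivity)
            exact mul_le_mul_of_nonneg_left e2 (Real.rpow_nonneg hgap0 _)
        _ = (μ / α) ^ (2 / p) * gapF C f x := by rw [e3]
    -- assemble
    have hstep : bregmanD f (x + η • (v - x)) x * suboptF C f x ^ (1 - 2 * θ / p)
        ≤ L / 2 * (η * N) ^ 2 * suboptF C f x ^ (1 - 2 * θ / p) :=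
      mul_le_mul_of_nonneg_right hD hsr_nn
    have hstep2 : L / 2 * (η * N) ^ 2 * suboptF C f x ^ (1 - 2 * θ / p)
        = L * η ^ 2 / 2 * (N ^ (2:ℕ) * suboptF C f x ^ (1 - 2 * θ / p)) := by
      ring
    have hstep3 : L * η ^ 2 / 2 * (N ^ (2:ℕ) * suboptF C f x ^ (1 - 2 * θ / p))
        ≤ L * η ^ 2 / 2 * ((μ / α) ^ (2 / p) * gapF C f x) := by
      apply mul_le_mul_of_nonneg_left hfinal (by positivity)
    calc bregmanD f (x + η • (v - x)) x * suboptF C f x ^ (1 - 2 * θ / p)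
        ≤ L / 2 * (η * N) ^ 2 * suboptF C f x ^ (1 - 2 * θ / p) := hstep
      _ = L * η ^ 2 / 2 * (N ^ (2:ℕ) * suboptF C f x ^ (1 - 2 * θ / p)) := hstep2
      _ ≤ L * η ^ 2 / 2 * ((μ / α) ^ (2 / p) * gapF C f x) := hstep3
      _ = L * (μ / α) ^ (2 / p) * η ^ 2 / 2 * gapF C f x := by ring
end
end
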